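/- arXiv:2210.01948 — 13 statements merged into one kernel-verified Lean document; each statement's English description precedes it below -/
import Mathlib

section
/- Equivalence of uniform and stopped error control (Lemma 3 of Howard et al.): let ψ = (ψ_t)_{t∈ℕ} be an adapted, pointwise nondecreasing process taking values in {0,1}, and let α ∈ (0,1). Then P(∃ t ∈ ℕ, ψ_t = 1) ≤ α if and only if P(ψ_τ = 1) ≤ α for every stopping time τ (possibly taking the value ∞), where ψ_∞ := sup_{t∈ℕ} ψ_t. -/
open MeasureTheory Filter
open scoped ENNReal

/-- **Equivalence of uniform and stopped error control** (Lemma 3 of Howard et al.):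
for an adapted, pointwise nondecreasing `{0,1}`-valued process `ψ` and `α ∈ (0,1)`,
`P(∃ t, ψ t = 1) ≤ α` iff `P(ψ_τ = 1) ≤ α` for every (possibly infinite) stopping
time `τ`, where `ψ_∞ := ⨆ t, ψ t`. -/
theorem uniform_iff_stopped_error_control
    {Ω : Type*} {m0 : MeasurableSpace Ω} {P : Measure Ω} [IsProbabilityMeasure P]
    {ℱ : Filtration ℕ m0} (ψ : ℕ → Ω → ℕ)
    (h01 : ∀ t ω, ψ t ω = 0 ∨ ψ t ω = 1)
    (hadp : ∀ t, Measurable[ℱ t] (ψ t))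
    (hmono : ∀ ω, Monotone fun t => ψ t ω)
    {α : ℝ} (hα : α ∈ Set.Ioo (0:ℝ) 1) :
    P {ω | ∃ t : ℕ, ψ t ω = 1} ≤ ENNReal.ofReal α ↔
      ∀ τ : Ω → ℕ∞, (∀ t : ℕ, MeasurableSet[ℱ t] {ω | τ ω ≤ (t : ℕ∞)}) →
        P {ω | (if τ ω = ⊤ then ⨆ t : ℕ, ψ t ω else ψ (τ ω).toNat ω) = 1}
          ≤ ENNReal.ofReal α := by
  have hbdd : ∀ ω, BddAbove (Set.range fun t => ψ t ω) := by
    intro ω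
    exact ⟨1, by rintro x ⟨t, rfl⟩; rcases h01 t ω with h | h <;> simp [h]⟩
  have hsup : ∀ ω, (⨆ t : ℕ, ψ t ω) = 1 ↔ ∃ t, ψ t ω = 1 := by
    intro ω
    constructor
    · intro h
      by_contra hc
      push_neg at hc
      have h0 : ∀ t, ψ t ω = 0 := fun t => (h01 t ω).resolve_right (hc t)
      have : (⨆ t : ℕ, ψ t ω) = 0 := by simp [h0]
      omega
    · rintro ⟨t, ht⟩
      refine le_antisymm ?_ ?_
      · exact ciSup_le fun s => by rcases h01 s ω with h | h <;> simp [h]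
      · exact ht ▸ le_ciSup (hbdd ω) t
  constructor
  · intro h τ hτ
    refine le_trans (measure_mono ?_) h
    intro ω hω
    simp only [Set.mem_setOf_eq] at hω ⊢
    split_ifs at hω with hcase
    · exact (hsup ω).mp hω
    · exact ⟨(τ ω).toNat, hω⟩
  · intro h
    have := h (fun _ => ⊤) (fun t => by
      simp only [top_le_iff]
      convert @MeasurableSet.empty Ω (ℱ t)
      ext ω
      simp)
    simpa [hsup] using this
end

section
/- Universal inference yields an e-process: let (𝓕_t)_{t∈ℕ} be a filtration on (Ω, 𝓕), let 𝐏 be a countable set of probability measures, and let Q be a probability measure such that Q restricted to 𝓕_t is absolutely continuous with respect to P restricted to 𝓕_t for every P ∈ 𝐏 and every t. Define E_t := inf_{P∈𝐏} d(Q|𝓕_t)/d(P|𝓕_t), the pointwise infimum of the Radon–Nikodym derivatives. Then for every P ∈ 𝐏 and every stopping time τ (possibly infinite, with E_∞ := lim inf_{t→∞} E_t on {τ = ∞}), E_P[E_τ] ≤ 1. -/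
open MeasureTheory Filter
open scoped ENNReal

/-- **Universal inference yields an e-process**: for a countable null `Ps` and an
alternative `Q` whose restrictions are absolutely continuous w.r.t. those of each
`P ∈ Ps`, the pointwise infimum of likelihood-ratio processes
`E t = ⨅ P ∈ Ps, d(Q|ℱ t)/d(P|ℱ t)` satisfies `E_P[E_τ] ≤ 1` for every `P ∈ Ps`
and every (possibly infinite) stopping time `τ`. -/
theorem universal_inference_eprocess
    {Ω : Type*} {m0 : MeasurableSpace Ω} {ℱ : Filtration ℕ m0}
    (Ps : Set (Measure Ω)) (hcnt : Ps.Countable)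
    (hprob : ∀ P ∈ Ps, IsProbabilityMeasure P)
    (Q : Measure Ω) [IsProbabilityMeasure Q]
    (habs : ∀ P ∈ Ps, ∀ t : ℕ, Q.trim (ℱ.le t) ≪ P.trim (ℱ.le t))
    (E : ℕ → Ω → ℝ≥0∞)
    (hE : ∀ t ω, E t ω = ⨅ P ∈ Ps, (Q.trim (ℱ.le t)).rnDeriv (P.trim (ℱ.le t)) ω)
    (P : Measure Ω) (hP : P ∈ Ps)
    (τ : Ω → ℕ∞)
    (hτ : ∀ t : ℕ, MeasurableSet[ℱ t] {ω | τ ω ≤ (t : ℕ∞)}) :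
    ∫⁻ ω, (if τ ω = ⊤ then Filter.liminf (fun t => E t ω) Filter.atTop
           else E (τ ω).toNat ω) ∂P ≤ 1 := by
  haveI : IsProbabilityMeasure P := hprob P hP
  set L : ℕ → Ω → ℝ≥0∞ := fun t => (Q.trim (ℱ.le t)).rnDeriv (P.trim (ℱ.le t)) with hL
  have hEL : ∀ t ω, E t ω ≤ L t ω := fun t ω => by
    rw [hE]; exact iInf₂_le P hP
  have hLmeas : ∀ t, Measurable[ℱ t] (L t) := fun t =>
    Measure.measurable_rnDeriv _ _
  have hLmeas0 : ∀ t, Measurable (L t) := fun t => (hLmeas t).mono (ℱ.le t) le_rfl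
  -- key identity: for `A ∈ ℱ t`, `∫⁻ ω in A, L t ω ∂P = Q A`
  have key : ∀ t, ∀ A : Set Ω, MeasurableSet[ℱ t] A → ∫⁻ ω in A, L t ω ∂P = Q A := by
    intro t A hA
    have hA' : MeasurableSet A := ℱ.le t _ hA
    calc ∫⁻ ω in A, L t ω ∂P
        = ∫⁻ ω, A.indicator (L t) ω ∂P := (lintegral_indicator hA' _).symm
      _ = ∫⁻ ω, A.indicator (L t) ω ∂(P.trim (ℱ.le t)) :=
          (lintegral_trim _ ((hLmeas t).indicator hA)).symm
      _ = ∫⁻ ω in A, L t ω ∂(P.trim (ℱ.le t)) := lintegral_indicator hA _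
      _ = Q.trim (ℱ.le t) A := Measure.setLIntegral_rnDeriv (habs P hP t) A
      _ = Q A := by rw [trim_measurableSet_eq _ hA]
  -- sets
  set S : ℕ → Set Ω := fun t => {ω | τ ω = (t : ℕ∞)} with hS
  have hSmeasF : ∀ t, MeasurableSet[ℱ t] (S t) := by
    intro t
    cases t with
    | zero =>
        have : S 0 = {ω | τ ω ≤ (0 : ℕ∞)} := by
          ext ω; simp [hS, le_zero_iff]
        rw [this]; exact hτ 0
    | succ n =>
        have : S (n + 1) = {ω | τ ω ≤ ((n + 1 : ℕ) : ℕ∞)} \ {ω | τ ω ≤ (n : ℕ∞)} := by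
          ext ω
          simp only [hS, Set.mem_setOf_eq, Set.mem_diff, not_le]
          constructor
          · intro h
            refine ⟨le_of_eq h, ?_⟩
            rw [h]
            exact_mod_cast (by exact_mod_cast Nat.lt_succ_self n : (n : ℕ∞) < (n + 1 : ℕ))
          · rintro ⟨h1, h2⟩
            refine le_antisymm h1 ?_
            have := Order.add_one_le_of_lt h2
            simpa using this
        rw [this]
        exact ((hτ (n + 1)).diff ((ℱ.mono (Nat.le_succ n) _ (hτ n))))
  have hSmeas : ∀ t, MeasurableSet (S t) := fun t => ℱ.le t _ (hSmeasF t)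
  set Sinf : Set Ω := {ω | τ ω = ⊤} with hSinf
  have hSinfc : Sinfᶜ = ⋃ t : ℕ, S t := by
    ext ω
    simp only [hSinf, hS, Set.mem_compl_iff, Set.mem_setOf_eq, Set.mem_iUnion]
    constructor
    · intro h
      exact ⟨(τ ω).toNat, (ENat.coe_toNat h).symm⟩
    · rintro ⟨t, ht⟩
      rw [ht]; exact ENat.coe_ne_top t
  have hSinfMeas : MeasurableSet Sinf := by
    have : Sinf = (⋃ t : ℕ, S t)ᶜ := by rw [← hSinfc, compl_compl]
    rw [this]
    exact (MeasurableSet.iUnion fun t => hSmeas t).compl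
  have hdisj : Pairwise (Function.onFun Disjoint S) := by
    intro i j hij
    refine Set.disjoint_left.2 fun ω hi hj => hij ?_
    have : (i : ℕ∞) = (j : ℕ∞) := by rw [← hi, ← hj]
    exact_mod_cast this
  -- the dominating function
  set g : Ω → ℝ≥0∞ := fun ω =>
    if τ ω = ⊤ then Filter.liminf (fun t => L t ω) Filter.atTop
    else L (τ ω).toNat ω with hg
  have hfg : ∀ ω, (if τ ω = ⊤ then Filter.liminf (fun t => E t ω) Filter.atTop
      else E (τ ω).toNat ω) ≤ g ω := by
    intro ω
    by_cases h : τ ω = ⊤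
    · simp only [hg, h, if_pos]
      exact liminf_le_liminf (Eventually.of_forall fun t => hEL t ω)
    · simp only [hg, h, if_neg, ite_false]
      exact hEL _ ω
  refine le_trans (lintegral_mono hfg) ?_
  -- split the integral
  rw [← lintegral_add_compl g hSinfMeas]
  -- the finite part
  have hfin : ∫⁻ ω in Sinfᶜ, g ω ∂P = ∑' t : ℕ, Q (S t) := by
    rw [hSinfc, lintegral_iUnion hSmeas hdisj]
    congr 1
    funext t
    have hcongr : ∫⁻ ω in S t, g ω ∂P = ∫⁻ ω in S t, L t ω ∂P := by
      refine lintegral_congr_ae ((ae_restrict_iff' (hSmeas t)).2 (ae_of_all _ ?_))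
      intro ω hω
      have hωt : τ ω = (t : ℕ∞) := hω
      have hne : τ ω ≠ ⊤ := by rw [hωt]; exact ENat.coe_ne_top t
      simp [hg, hne, hωt]
    rw [hcongr, key t _ (hSmeasF t)]
  -- the infinite part
  have hinf : ∫⁻ ω in Sinf, g ω ∂P ≤ Q Sinf := by
    have hcongr : ∫⁻ ω in Sinf, g ω ∂P
        = ∫⁻ ω in Sinf, Filter.liminf (fun t => L t ω) Filter.atTop ∂P := by
      refine lintegral_congr_ae ((ae_restrict_iff' hSinfMeas).2 (ae_of_all _ ?_))
      intro ω hω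
      simp [hg, hω.out]
    rw [hcongr]
    refine le_trans (lintegral_liminf_le fun t => hLmeas0 t) ?_
    have hbound : ∀ t : ℕ, ∫⁻ ω in Sinf, L t ω ∂P ≤ Q {ω | τ ω ≤ (t : ℕ∞)}ᶜ := by
      intro t
      have hsub : Sinf ⊆ {ω | τ ω ≤ (t : ℕ∞)}ᶜ := by
        intro ω hω
        simp only [Set.mem_compl_iff, Set.mem_setOf_eq, not_le]
        rw [hω.out]
        exact lt_top_iff_ne_top.2 (ENat.coe_ne_top t)
      refine le_trans (lintegral_mono_set hsub) (le_of_eq ?_)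
      exact key t _ (hτ t).compl
    refine le_trans (liminf_le_liminf (Eventually.of_forall hbound)) ?_
    have htend : Tendsto (fun t : ℕ => Q {ω | τ ω ≤ (t : ℕ∞)}ᶜ) atTop (nhds (Q Sinf)) := by
      have hiInter : ⋂ t : ℕ, {ω | τ ω ≤ (t : ℕ∞)}ᶜ = Sinf := by
        ext ω
        simp only [Set.mem_iInter, Set.mem_compl_iff, Set.mem_setOf_eq, not_le, hSinf]
        constructor
        · intro h
          by_contra hne
          have := h (τ ω).toNat
          rw [ENat.coe_toNat hne] at this
          exact lt_irrefl _ this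
        · intro h t
          rw [h]
          exact lt_top_iff_ne_top.2 (ENat.coe_ne_top t)
      have := tendsto_measure_iInter_atTop (μ := Q)
        (fun t : ℕ => ((ℱ.le t _ (hτ t)).compl).nullMeasurableSet)
        (fun i j hij => Set.compl_subset_compl.2 fun ω (hω : τ ω ≤ (i : ℕ∞)) =>
          show τ ω ≤ (j : ℕ∞) from le_trans hω (by exact_mod_cast hij))
        ⟨0, measure_ne_top Q _⟩
      rwa [hiInter] at this
    rw [htend.liminf_eq]
  refine le_trans (add_le_add hinf (le_of_eq hfin)) ?_
  -- sum up
  rw [← measure_iUnion hdisj hSmeas, ← hSinfc, measure_add_measure_compl hSinfMeas]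
  simp
end

section
/- Sub-Gaussian mixture confidence sequence (Darling–Robbins): let (X_t)_{t≥1} be an adapted real-valued process with, for every t ≥ 1 and every λ ∈ ℝ, E[exp(λ(X_t − μ)) | 𝓕_{t−1}] ≤ exp(λ²σ²/2) a.s., where σ > 0 and μ ∈ ℝ. Let Y_t := Σ_{i=1}^t X_i. Then for every ρ > 0 and α ∈ (0,1), P(∃ t ≥ 1 : |Y_t/t − μ| ≥ σ·√( ((tρ² + 1)/(t²ρ²)) · log((tρ² + 1)/α²) )) ≤ α. -/
open MeasureTheory Real

lemma gauss_integrable (a b : ℝ) (ha : 0 < a) :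
    Integrable (fun x : ℝ => Real.exp (-a*x^2 + b*x)) := by
  have h : ∀ x : ℝ, -a*x^2 + b*x = -a*(x - b/(2*a))^2 + b^2/(4*a) := by
    intro x; field_simp; ring
  simp_rw [h, Real.exp_add]
  exact ((integrable_exp_neg_mul_sq ha).comp_sub_right (b/(2*a))).mul_const _

lemma gauss_int (a b : ℝ) (ha : 0 < a) :
    ∫ x : ℝ, Real.exp (-a*x^2 + b*x) = Real.sqrt (π/a) * Real.exp (b^2/(4*a)) := by
  have h : ∀ x : ℝ, -a*x^2 + b*x = -a*(x - b/(2*a))^2 + b^2/(4*a) := by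
    intro x; field_simp; ring
  simp_rw [h, Real.exp_add]
  rw [integral_mul_const]
  congr 1
  rw [integral_sub_right_eq_self (μ := volume) (fun x : ℝ => Real.exp (-a*x^2)) (b/(2*a))]
  exact integral_gaussian a

section mix
variable {σ ρ : ℝ} (hσ : 0 < σ) (hρ : 0 < ρ)

lemma mix_exponent (hσ : 0 < σ) (hρ : 0 < ρ) (s : ℝ) (t : ℕ) (l : ℝ) :
    (Real.sqrt (2*π) * (ρ/σ))⁻¹ * Real.exp (-(l^2) / (2*(ρ/σ)^2)) *
      Real.exp (l * s - l^2*σ^2*(t:ℝ)/2)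
    = (Real.sqrt (2*π) * (ρ/σ))⁻¹ *
      Real.exp (-(1/(2*(ρ/σ)^2) + σ^2*(t:ℝ)/2)*l^2 + s*l) := by
  rw [mul_assoc, ← Real.exp_add]
  congr 2
  have h1 : (ρ/σ) ≠ 0 := by positivity
  field_simp
  ring

lemma mix_integrable (hσ : 0 < σ) (hρ : 0 < ρ) (s : ℝ) (t : ℕ) :
    Integrable (fun l : ℝ => (Real.sqrt (2*π) * (ρ/σ))⁻¹ *
      Real.exp (-(l^2) / (2*(ρ/σ)^2)) * Real.exp (l * s - l^2*σ^2*(t:ℝ)/2)) := by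
  simp_rw [mix_exponent hσ hρ s t]
  have ha : 0 < 1/(2*(ρ/σ)^2) + σ^2*(t:ℝ)/2 := by positivity
  exact (gauss_integrable _ s ha).const_mul _

lemma mix_eval (hσ : 0 < σ) (hρ : 0 < ρ) (s : ℝ) (t : ℕ) :
    ∫ l : ℝ, (Real.sqrt (2*π) * (ρ/σ))⁻¹ * Real.exp (-(l^2) / (2*(ρ/σ)^2)) *
        Real.exp (l * s - l^2*σ^2*(t:ℝ)/2)
    = (Real.sqrt ((t:ℝ)*ρ^2+1))⁻¹ *
        Real.exp (ρ^2 * s^2 / (2*σ^2*((t:ℝ)*ρ^2+1))) := by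
  simp_rw [mix_exponent hσ hρ s t]
  set a : ℝ := 1/(2*(ρ/σ)^2) + σ^2*(t:ℝ)/2 with ha_def
  have ha : 0 < a := by positivity
  have hK : (0:ℝ) < (t:ℝ)*ρ^2+1 := by positivity
  rw [integral_const_mul, gauss_int a s ha]
  have hτ : (0:ℝ) < ρ/σ := by positivity
  have ha2 : a = ((t:ℝ)*ρ^2+1)/(2*(ρ/σ)^2) := by
    rw [ha_def]; field_simp; ring
  have hπa : π/a = (2*π)*(ρ/σ)^2/((t:ℝ)*ρ^2+1) := by
    rw [ha2]; field_simp
  have hsqrt : Real.sqrt (π/a) = Real.sqrt (2*π) * (ρ/σ) / Real.sqrt ((t:ℝ)*ρ^2+1) := by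
    rw [hπa, Real.sqrt_div (by positivity), Real.sqrt_mul (by positivity),
      Real.sqrt_sq hτ.le]
  have hexp : s^2/(4*a) = ρ^2 * s^2 / (2*σ^2*((t:ℝ)*ρ^2+1)) := by
    rw [ha2]; field_simp; ring
  rw [hsqrt, hexp, ← mul_assoc]
  congr 1
  have h0 : Real.sqrt (2*π) * (ρ/σ) ≠ 0 := by positivity
  have h1 : Real.sqrt ((t:ℝ)*ρ^2+1) ≠ 0 := by positivity
  field_simp

lemma mix_density_integral (hσ : 0 < σ) (hρ : 0 < ρ) :
    ∫ l : ℝ, (Real.sqrt (2*π) * (ρ/σ))⁻¹ * Real.exp (-(l^2) / (2*(ρ/σ)^2)) = 1 := by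
  have h := mix_eval hσ hρ 0 0
  simpa using h

lemma mix_density_integrable (hσ : 0 < σ) (hρ : 0 < ρ) :
    Integrable (fun l : ℝ => (Real.sqrt (2*π) * (ρ/σ))⁻¹ *
      Real.exp (-(l^2) / (2*(ρ/σ)^2))) := by
  have h := mix_integrable hσ hρ 0 0
  simpa using h
end mix
open MeasureTheory Real

lemma integrable_mul_of_nonneg_of_condexp_le
    {Ω : Type*} {m m0 : MeasurableSpace Ω} (hm : m ≤ m0) {P : Measure Ω} [IsFiniteMeasure P]
    {f g : Ω → ℝ} (hf : StronglyMeasurable[m] f) (hf0 : 0 ≤ f) (hfi : Integrable f P)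
    (hg0 : 0 ≤ g) (hgi : Integrable g P) {c : ℝ} (hc0 : 0 ≤ c)
    (hc : P[g|m] ≤ᵐ[P] fun _ => c) :
    Integrable (f * g) P ∧ P[f * g|m] ≤ᵐ[P] fun ω => c * f ω := by
  set fN : ℕ → Ω → ℝ := fun N ω => min (f ω) N with hfN_def
  have hfN_meas : ∀ N, StronglyMeasurable[m] (fN N) := by
    intro N
    exact Measurable.stronglyMeasurable (Measurable.min hf.measurable (@measurable_const ℝ Ω _ m _))
  have hfN0 : ∀ N ω, 0 ≤ fN N ω := fun N ω => le_min (hf0 ω) (Nat.cast_nonneg N)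
  have hfN_le : ∀ N ω, fN N ω ≤ f ω := fun N ω => min_le_left _ _
  have hfN_bdd : ∀ N, ∀ ω, ‖fN N ω‖ ≤ (N : ℝ) := by
    intro N ω
    rw [Real.norm_eq_abs, abs_of_nonneg (hfN0 N ω)]
    exact min_le_right _ _
  have hfNg_int : ∀ N, Integrable (fN N * g) P := by
    intro N
    exact hgi.bdd_mul ((hfN_meas N).mono hm).aestronglyMeasurable (Filter.Eventually.of_forall (hfN_bdd N))
  have hfN_int : ∀ N, Integrable (fN N) P := by
    intro N
    refine hfi.mono ((hfN_meas N).mono hm).aestronglyMeasurable ?_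
    filter_upwards with ω
    rw [Real.norm_eq_abs, Real.norm_eq_abs, abs_of_nonneg (hfN0 N ω), abs_of_nonneg (hf0 ω)]
    exact hfN_le N ω
  have hcond : ∀ N, P[fN N * g|m] =ᵐ[P] fN N * P[g|m] :=
    fun N => condExp_mul_of_stronglyMeasurable_left (hfN_meas N) (hfNg_int N) hgi
  have hint_bound : ∀ N, ∫ ω, (fN N * g) ω ∂P ≤ c * ∫ ω, f ω ∂P := by
    intro N
    have e1 : ∫ ω, (fN N * g) ω ∂P = ∫ ω, (P[fN N * g|m]) ω ∂P := (integral_condExp hm).symm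
    rw [e1, integral_congr_ae (hcond N)]
    have h1 : Integrable (fN N * P[g|m]) P :=
      integrable_condExp.bdd_mul ((hfN_meas N).mono hm).aestronglyMeasurable (Filter.Eventually.of_forall (hfN_bdd N))
    have h2 : (fN N * P[g|m]) ≤ᵐ[P] fun ω => c * fN N ω := by
      filter_upwards [hc] with ω hω
      simpa [mul_comm] using mul_le_mul_of_nonneg_left hω (hfN0 N ω)
    calc ∫ ω, (fN N * P[g|m]) ω ∂P ≤ ∫ ω, c * fN N ω ∂P :=
          integral_mono_ae h1 ((hfN_int N).const_mul c) h2
      _ = c * ∫ ω, fN N ω ∂P := integral_const_mul c _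
      _ ≤ c * ∫ ω, f ω ∂P := by
          refine mul_le_mul_of_nonneg_left ?_ hc0
          exact integral_mono (hfN_int N) hfi (fun ω => hfN_le N ω)
  have hsup : ∀ ω, (⨆ N : ℕ, ENNReal.ofReal ((fN N * g) ω)) = ENNReal.ofReal (f ω * g ω) := by
    intro ω
    refine le_antisymm (iSup_le fun N => ENNReal.ofReal_le_ofReal
      (mul_le_mul_of_nonneg_right (hfN_le N ω) (hg0 ω))) ?_
    refine le_iSup_of_le ⌈f ω⌉₊ ?_
    have : fN ⌈f ω⌉₊ ω = f ω := min_eq_left (Nat.le_ceil _)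
    simp only [Pi.mul_apply, this, le_refl]
  have hlin : ∫⁻ ω, ENNReal.ofReal (f ω * g ω) ∂P ≤ ENNReal.ofReal (c * ∫ ω, f ω ∂P) := by
    have e2 : ∫⁻ ω, ENNReal.ofReal (f ω * g ω) ∂P
        = ⨆ N : ℕ, ∫⁻ ω, ENNReal.ofReal ((fN N * g) ω) ∂P := by
      rw [show (fun ω => ENNReal.ofReal (f ω * g ω))
          = fun ω => ⨆ N : ℕ, ENNReal.ofReal ((fN N * g) ω) from funext fun ω => (hsup ω).symm]
      exact lintegral_iSup' (fun N =>
          (ENNReal.measurable_ofReal.comp_aemeasurable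
            (((hfN_meas N).mono hm).aemeasurable.mul hgi.aemeasurable) :
            AEMeasurable (fun ω => ENNReal.ofReal ((fN N * g) ω)) P))
        (Filter.Eventually.of_forall fun ω N M hNM => ENNReal.ofReal_le_ofReal
          (mul_le_mul_of_nonneg_right (min_le_min le_rfl (Nat.cast_le.2 hNM)) (hg0 ω)))
    rw [e2]
    refine iSup_le fun N => ?_
    rw [← ofReal_integral_eq_lintegral_ofReal (hfNg_int N)
      (Filter.Eventually.of_forall fun ω => mul_nonneg (hfN0 N ω) (hg0 ω))]
    exact ENNReal.ofReal_le_ofReal (hint_bound N)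
  have hint_fg : Integrable (f * g) P := by
    refine ⟨(hf.mono hm).aestronglyMeasurable.mul hgi.aestronglyMeasurable, ?_⟩
    exact (hasFiniteIntegral_iff_ofReal
      (Filter.Eventually.of_forall fun ω => mul_nonneg (hf0 ω) (hg0 ω))).2
      (lt_of_le_of_lt hlin ENNReal.ofReal_lt_top)
  refine ⟨hint_fg, ?_⟩
  filter_upwards [condExp_mul_of_stronglyMeasurable_left hf hint_fg hgi, hc] with ω h1 h2
  rw [h1]
  simpa [mul_comm] using mul_le_mul_of_nonneg_left h2 (hf0 ω)
open Real

lemma event_imp {σ ρ α : ℝ} (hσ : 0 < σ) (hρ : 0 < ρ) (hα : 0 < α) (hα1 : α < 1)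
    (t : ℕ) (ht : 1 ≤ t) (s : ℝ)
    (h : σ * Real.sqrt ((((t:ℝ)*ρ^2+1) / ((t:ℝ)^2*ρ^2)) *
        Real.log (((t:ℝ)*ρ^2+1)/α^2)) ≤ |s| / (t:ℝ)) :
    1/α ≤ (Real.sqrt ((t:ℝ)*ρ^2+1))⁻¹ *
        Real.exp (ρ^2 * s^2 / (2*σ^2*((t:ℝ)*ρ^2+1))) := by
  have htpos : (0:ℝ) < t := by exact_mod_cast ht
  set K : ℝ := (t:ℝ)*ρ^2+1 with hK_def
  have hK1 : 1 < K := by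
    have : (0:ℝ) < (t:ℝ)*ρ^2 := by positivity
    linarith
  have hK0 : 0 < K := by linarith
  have hr1 : 1 < K/α^2 := by
    have hα2 : α^2 < 1 := by nlinarith
    have hα2' : 0 < α^2 := by positivity
    rw [lt_div_iff₀ hα2']
    nlinarith
  have hlog : 0 ≤ Real.log (K/α^2) := Real.log_nonneg hr1.le
  have hq : 0 ≤ (K / ((t:ℝ)^2*ρ^2)) * Real.log (K/α^2) := by positivity
  -- square the hypothesis
  have h2 : σ^2 * ((K / ((t:ℝ)^2*ρ^2)) * Real.log (K/α^2)) ≤ s^2/(t:ℝ)^2 := by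
    have hL0 : 0 ≤ σ * Real.sqrt ((K / ((t:ℝ)^2*ρ^2)) * Real.log (K/α^2)) := by positivity
    have := mul_self_le_mul_self hL0 h
    calc σ^2 * ((K / ((t:ℝ)^2*ρ^2)) * Real.log (K/α^2))
        = (σ * Real.sqrt ((K / ((t:ℝ)^2*ρ^2)) * Real.log (K/α^2)))
          * (σ * Real.sqrt ((K / ((t:ℝ)^2*ρ^2)) * Real.log (K/α^2))) := by
          rw [mul_mul_mul_comm, Real.mul_self_sqrt hq]; ring
      _ ≤ (|s|/(t:ℝ)) * (|s|/(t:ℝ)) := this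
      _ = s^2/(t:ℝ)^2 := by rw [div_mul_div_comm, ← sq_abs]; ring
  -- exponent bound
  have hexp : Real.log (K/α^2) / 2 ≤ ρ^2 * s^2 / (2*σ^2*K) := by
    have hs2 : σ^2 * K / ρ^2 * Real.log (K/α^2) ≤ s^2 := by
      have := mul_le_mul_of_nonneg_left h2 (le_of_lt (by positivity : (0:ℝ) < (t:ℝ)^2))
      calc σ^2 * K / ρ^2 * Real.log (K/α^2)
          = (t:ℝ)^2 * (σ^2 * ((K / ((t:ℝ)^2*ρ^2)) * Real.log (K/α^2))) := by
            field_simp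
        _ ≤ (t:ℝ)^2 * (s^2/(t:ℝ)^2) := this
        _ = s^2 := by field_simp
    rw [div_le_div_iff₀ (by norm_num) (by positivity)]
    have h3 := mul_le_mul_of_nonneg_left hs2 (le_of_lt (by positivity : (0:ℝ) < ρ^2))
    calc Real.log (K/α^2) * (2*σ^2*K) = 2 * (ρ^2 * (σ^2 * K / ρ^2 * Real.log (K/α^2))) := by
          field_simp
      _ ≤ 2 * (ρ^2 * s^2) := by linarith
      _ = ρ^2 * s^2 * 2 := by ring
  have hsqrtK : 0 < Real.sqrt K := Real.sqrt_pos.2 hK0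
  have key : Real.sqrt K / α ≤ Real.exp (ρ^2 * s^2 / (2*σ^2*K)) := by
    have e1 : Real.exp (Real.log (K/α^2) / 2) = Real.sqrt K / α := by
      rw [Real.exp_half, Real.exp_log (by positivity), Real.sqrt_div (by positivity : (0:ℝ) ≤ K),
        Real.sqrt_sq hα.le]
    rw [← e1]
    exact Real.exp_le_exp.2 hexp
  calc 1/α = (Real.sqrt K)⁻¹ * (Real.sqrt K / α) := by field_simp
    _ ≤ _ := by
      exact mul_le_mul_of_nonneg_left key (by positivity)

open MeasureTheory Filter
open scoped ENNReal

/-- **Sub-Gaussian mixture confidence sequence** (Darling–Robbins): if each `X t`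
(for `t ≥ 1`) is conditionally `σ`-sub-Gaussian around `μ` given `ℱ (t-1)`, then
for every `ρ > 0` and `α ∈ (0,1)`, with `Y t = ∑_{i=1}^t X i`,
`P(∃ t ≥ 1 : |Y t / t - μ| ≥ σ √(((tρ²+1)/(t²ρ²)) log((tρ²+1)/α²))) ≤ α`. -/
theorem subGaussian_mixture_confidence_sequence
    {Ω : Type*} {m0 : MeasurableSpace Ω} {P : Measure Ω} [IsProbabilityMeasure P]
    {ℱ : Filtration ℕ m0}
    (X : ℕ → Ω → ℝ) (hX : ∀ t, 1 ≤ t → StronglyMeasurable[ℱ t] (X t))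
    (σ μ : ℝ) (hσ : 0 < σ)
    (hint : ∀ t, 1 ≤ t → ∀ l : ℝ, Integrable (fun ω => Real.exp (l * (X t ω - μ))) P)
    (hsubG : ∀ t, 1 ≤ t → ∀ l : ℝ,
      P[fun ω => Real.exp (l * (X t ω - μ))|ℱ (t-1)]
        ≤ᵐ[P] fun _ => Real.exp (l^2 * σ^2 / 2))
    (ρ : ℝ) (hρ : 0 < ρ) {α : ℝ} (hα : α ∈ Set.Ioo (0:ℝ) 1) :
    P {ω | ∃ t : ℕ, 1 ≤ t ∧
        σ * Real.sqrt ((((t : ℝ) * ρ^2 + 1) / ((t : ℝ)^2 * ρ^2)) *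
            Real.log (((t : ℝ) * ρ^2 + 1) / α^2))
          ≤ |(∑ i ∈ Finset.Icc 1 t, X i ω) / (t : ℝ) - μ|}
      ≤ ENNReal.ofReal α := by
  obtain ⟨hα0, hα1⟩ := hα
  -- the centered sum process
  set S : ℕ → Ω → ℝ := fun t ω => (∑ i ∈ Finset.Icc 1 t, X i ω) - (t:ℝ)*μ with hS_def
  -- the per-λ exponential process
  set L : ℝ → ℕ → Ω → ℝ :=
    fun l t ω => Real.exp (l * S t ω - l^2*σ^2*(t:ℝ)/2) with hL_def
  -- the mixture process
  set M : ℕ → Ω → ℝ := fun t ω => (Real.sqrt ((t:ℝ)*ρ^2+1))⁻¹ *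
      Real.exp (ρ^2 * (S t ω)^2 / (2*σ^2*((t:ℝ)*ρ^2+1))) with hM_def
  -- the Gaussian mixing density
  set w : ℝ → ℝ :=
    fun l => (Real.sqrt (2*Real.pi) * (ρ/σ))⁻¹ * Real.exp (-(l^2) / (2*(ρ/σ)^2)) with hw_def
  have hw0 : ∀ l, 0 ≤ w l := fun l => by
    rw [hw_def]; positivity
  have hS_meas : ∀ t, Measurable[ℱ t] (S t) := by
    intro t
    refine Measurable.sub ?_ measurable_const
    refine Finset.measurable_sum _ (fun i hi => ?_)
    rw [Finset.mem_Icc] at hi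
    exact ((hX i hi.1).measurable).mono (ℱ.mono hi.2) le_rfl
  have hS0 : ∀ ω, S 0 ω = 0 := by
    intro ω; simp [hS_def]
  have hS_succ : ∀ t ω, S (t+1) ω = S t ω + (X (t+1) ω - μ) := by
    intro t ω
    simp only [hS_def]
    rw [Finset.sum_Icc_succ_top (Nat.one_le_iff_ne_zero.mpr (Nat.succ_ne_zero t))]
    push_cast; ring
  have hL_adapted : ∀ l, Adapted ℱ (L l) := by
    intro l t
    exact (Real.measurable_exp.comp
      (((hS_meas t).const_mul l).sub measurable_const))
  have hL0 : ∀ l, L l 0 = fun _ => (1:ℝ) := by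
    intro l; funext ω; simp [hL_def, hS0 ω]
  have hL_pos : ∀ l t ω, 0 < L l t ω := fun l t ω => Real.exp_pos _
  have hL_succ : ∀ l t, L l (t+1)
      = (L l t * fun ω => Real.exp (l*(X (t+1) ω - μ))) * fun _ => Real.exp (-(l^2*σ^2/2)) := by
    intro l t
    funext ω
    simp only [Pi.mul_apply, hL_def, ← Real.exp_add]
    congr 1
    rw [hS_succ t ω]
    push_cast; ring
  -- one-step supermartingale estimate
  have hstep : ∀ (l : ℝ) (t : ℕ), Integrable (L l t) P →
      Integrable (L l (t+1)) P ∧ P[L l (t+1)|ℱ t] ≤ᵐ[P] L l t := by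
    intro l t hint_t
    set g : Ω → ℝ := fun ω => Real.exp (l*(X (t+1) ω - μ)) with hg_def
    have hg0 : 0 ≤ g := fun ω => (Real.exp_pos _).le
    have hgi : Integrable g P := hint (t+1) (Nat.le_add_left 1 t) l
    have hcex : P[g|ℱ t] ≤ᵐ[P] fun _ => Real.exp (l^2*σ^2/2) := by
      simpa using hsubG (t+1) (Nat.le_add_left 1 t) l
    have hLmeas : StronglyMeasurable[ℱ t] (L l t) :=
      (Real.measurable_exp.comp
        (((hS_meas t).const_mul l).sub measurable_const)).stronglyMeasurable
    have hL0' : 0 ≤ L l t := fun ω => (hL_pos l t ω).le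
    obtain ⟨hfg, hcond⟩ := integrable_mul_of_nonneg_of_condexp_le (ℱ.le t) hLmeas hL0'
      hint_t hg0 hgi (Real.exp_pos _).le hcex
    constructor
    · rw [hL_succ l t]
      exact hfg.mul_const _
    · rw [hL_succ l t]
      have e : (L l t * g) * (fun _ => Real.exp (-(l^2*σ^2/2)))
          = Real.exp (-(l^2*σ^2/2)) • (L l t * g) := by
        funext ω; simp [mul_comm]
      rw [e]
      refine (condExp_smul (Real.exp (-(l^2*σ^2/2))) (L l t * g) _).le.trans ?_
      filter_upwards [hcond] with ω hω
      have h1 : Real.exp (-(l^2*σ^2/2)) * (P[L l t * g|ℱ t]) ω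
          ≤ Real.exp (-(l^2*σ^2/2)) * (Real.exp (l^2*σ^2/2) * L l t ω) :=
        mul_le_mul_of_nonneg_left hω (Real.exp_pos _).le
      calc (Real.exp (-(l^2*σ^2/2)) • (P[L l t * g|ℱ t])) ω
          = Real.exp (-(l^2*σ^2/2)) * (P[L l t * g|ℱ t]) ω := rfl
        _ ≤ Real.exp (-(l^2*σ^2/2)) * (Real.exp (l^2*σ^2/2) * L l t ω) := h1
        _ = L l t ω := by
            rw [← mul_assoc, ← Real.exp_add]
            simp
  have hL_int : ∀ l t, Integrable (L l t) P := by
    intro l t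
    induction t with
    | zero => rw [hL0 l]; exact integrable_const 1
    | succ n ih => exact (hstep l n ih).1
  -- per-n bound via Ville's inequality
  have hAn : ∀ n : ℕ,
      P {ω | ∃ t : ℕ, 1 ≤ t ∧ t ≤ n ∧ 1/α ≤ M t ω} ≤ ENNReal.ofReal α := by
    intro n
    set An : Set Ω := {ω | ∃ t : ℕ, 1 ≤ t ∧ t ≤ n ∧ 1/α ≤ M t ω} with hAn_def
    set τn : Ω → WithTop ℕ := fun ω => ((hittingBtwn M {y : ℝ | 1/α ≤ y} 1 n ω : ℕ) : WithTop ℕ) with hτn_def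
    have hM_adapted : Adapted ℱ M := by
      intro t
      exact (Real.measurable_exp.comp
        ((((hS_meas t).pow_const 2).const_mul (ρ^2)).div_const _)).const_mul _
    have hτ : IsStoppingTime ℱ τn :=
      Adapted.isStoppingTime_hittingBtwn hM_adapted measurableSet_Ici
    have hτ_le : ∀ ω, τn ω ≤ n := fun ω => WithTop.coe_le_coe.2 (hittingBtwn_le ω)
    -- stopped values
    set A : Ω → ℝ := stoppedValue S τn with hA_def
    set B : Ω → ℝ := fun ω => ((τn ω).untopA : ℝ) with hB_def
    have hS_prog : ProgMeasurable ℱ S :=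
      StronglyAdapted.isStronglyProgressive_of_discrete (fun t => (hS_meas t).stronglyMeasurable)
    have hA_meas : Measurable A :=
      ((stronglyMeasurable_stoppedValue_of_le hS_prog hτ hτ_le).measurable).mono
        (ℱ.le n) le_rfl
    have hτ_meas : Measurable τn :=
      ((hτ.measurable_of_le hτ_le).mono (ℱ.le n) le_rfl)
    have hB_meas : Measurable B := (measurable_from_top).comp hτ_meas.untopA
    have hM_prog : ProgMeasurable ℱ M := StronglyAdapted.isStronglyProgressive_of_discrete (fun t => (hM_adapted t).stronglyMeasurable)
    have hsv_meas : Measurable (stoppedValue M τn) :=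
      ((stronglyMeasurable_stoppedValue_of_le hM_prog hτ hτ_le).measurable).mono
        (ℱ.le n) le_rfl
    -- identifications of stopped values
    have hsvL : ∀ l ω, stoppedValue (L l) τn ω
        = Real.exp (l * A ω - l^2*σ^2*B ω/2) := by
      intro l ω; rfl
    have hsvM : ∀ ω, stoppedValue M τn ω
        = (Real.sqrt (B ω*ρ^2+1))⁻¹ *
            Real.exp (ρ^2 * (A ω)^2 / (2*σ^2*(B ω*ρ^2+1))) := by
      intro ω; rfl
    -- optional stopping per λ
    have hOS : ∀ l : ℝ, Integrable (stoppedValue (L l) τn) P ∧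
        ∫ ω, stoppedValue (L l) τn ω ∂P ≤ 1 := by
      intro l
      have hsuper : Supermartingale (L l) ℱ P :=
        supermartingale_nat (fun t => (hL_adapted l t).stronglyMeasurable) (hL_int l) (fun t => (hstep l t (hL_int l t)).2)
      have hsub : Submartingale (-(L l)) ℱ P := hsuper.neg
      have hIntSv : Integrable (stoppedValue (L l) τn) P :=
        integrable_stoppedValue ℕ hτ (hL_int l) hτ_le
      refine ⟨hIntSv, ?_⟩
      have hmono := hsub.expected_stoppedValue_mono (isStoppingTime_const ℱ 0) hτ
        (fun ω => WithTop.coe_le_coe.2 (Nat.zero_le _)) hτ_le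
      have e0 : stoppedValue (-(L l)) (fun _ => WithTop.some (0:ℕ)) = fun ω => -(L l 0 ω) := rfl
      have e1 : stoppedValue (-(L l)) τn = fun ω => -(stoppedValue (L l) τn ω) := rfl
      rw [e0, e1, integral_neg, integral_neg] at hmono
      have h2 : ∫ ω, L l 0 ω ∂P = 1 := by
        rw [hL0 l]; simp
      rw [h2] at hmono
      linarith [neg_le_neg_iff.mp hmono]
    -- Ville's bound
    have step1 : ENNReal.ofReal (1/α) * P An
        ≤ ∫⁻ ω, ENNReal.ofReal (stoppedValue M τn ω) ∂P := by
      have hAn_pt : ∀ ω ∈ An, ENNReal.ofReal (1/α) ≤ ENNReal.ofReal (stoppedValue M τn ω) := by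
        intro ω hω
        obtain ⟨t, ht1, htn, htM⟩ := hω
        have hmem : stoppedValue M τn ω ∈ {y : ℝ | 1/α ≤ y} := by
          refine hittingBtwn_mem_set (u := M) ?_
          exact ⟨t, Set.mem_Icc.2 ⟨ht1, htn⟩, htM⟩
        exact ENNReal.ofReal_le_ofReal hmem
      calc ENNReal.ofReal (1/α) * P An
          = ∫⁻ _ in An, ENNReal.ofReal (1/α) ∂P := by rw [setLIntegral_const, mul_comm]
        _ ≤ ∫⁻ ω in An, ENNReal.ofReal (stoppedValue M τn ω) ∂P :=
            setLIntegral_mono (hsv_meas.ennreal_ofReal) hAn_pt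
        _ ≤ ∫⁻ ω, ENNReal.ofReal (stoppedValue M τn ω) ∂P := setLIntegral_le_lintegral _ _
    have hw_meas : Measurable w := by
      rw [hw_def]
      exact (Real.measurable_exp.comp
        (((measurable_id.pow_const 2).neg).div_const _)).const_mul _
    have hinner_meas : ∀ l : ℝ, Measurable (fun ω =>
        ENNReal.ofReal (Real.exp (l * A ω - l^2*σ^2*B ω/2))) := by
      intro l
      refine Measurable.ennreal_ofReal ?_
      exact Real.measurable_exp.comp ((hA_meas.const_mul l).sub
        ((hB_meas.const_mul (l^2*σ^2)).div_const 2))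
    have step2 : ∫⁻ ω, ENNReal.ofReal (stoppedValue M τn ω) ∂P
        = ∫⁻ ω, (∫⁻ l : ℝ, ENNReal.ofReal (w l * Real.exp (l * A ω - l^2*σ^2*B ω/2))) ∂P := by
      refine lintegral_congr fun ω => ?_
      rw [hsvM ω, ← mix_eval hσ hρ (A ω) (τn ω).untopA,
        ofReal_integral_eq_lintegral_ofReal (mix_integrable hσ hρ (A ω) (τn ω).untopA)
          (Filter.Eventually.of_forall fun l => by positivity)]
    have hjoint : Measurable (fun p : Ω × ℝ =>
        ENNReal.ofReal (w p.2 * Real.exp (p.2 * A p.1 - p.2^2*σ^2*B p.1/2))) := by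
      refine Measurable.ennreal_ofReal (Measurable.mul (hw_meas.comp measurable_snd) ?_)
      refine Real.measurable_exp.comp ?_
      exact (measurable_snd.mul (hA_meas.comp measurable_fst)).sub
        ((((measurable_snd.pow_const 2).mul_const (σ^2)).mul
          (hB_meas.comp measurable_fst)).div_const 2)
    have step3 : ∫⁻ ω, (∫⁻ l : ℝ, ENNReal.ofReal (w l * Real.exp (l * A ω - l^2*σ^2*B ω/2))) ∂P
        = ∫⁻ l : ℝ, (∫⁻ ω, ENNReal.ofReal (w l * Real.exp (l * A ω - l^2*σ^2*B ω/2)) ∂P) :=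
      lintegral_lintegral_swap hjoint.aemeasurable
    have step4 : ∀ l : ℝ, (∫⁻ ω, ENNReal.ofReal (w l * Real.exp (l * A ω - l^2*σ^2*B ω/2)) ∂P)
        ≤ ENNReal.ofReal (w l) := by
      intro l
      simp_rw [ENNReal.ofReal_mul (hw0 l)]
      rw [lintegral_const_mul _ (hinner_meas l)]
      have e : (fun ω => ENNReal.ofReal (Real.exp (l * A ω - l^2*σ^2*B ω/2)))
          = fun ω => ENNReal.ofReal (stoppedValue (L l) τn ω) :=
        funext fun ω => by rw [hsvL l ω]
      rw [e, ← ofReal_integral_eq_lintegral_ofReal (hOS l).1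
        (Filter.Eventually.of_forall fun ω => (hL_pos l (τn ω).untopA ω).le)]
      calc ENNReal.ofReal (w l) * ENNReal.ofReal (∫ ω, stoppedValue (L l) τn ω ∂P)
          ≤ ENNReal.ofReal (w l) * ENNReal.ofReal 1 :=
            mul_le_mul_right (ENNReal.ofReal_le_ofReal (hOS l).2) _
        _ = ENNReal.ofReal (w l) := by rw [ENNReal.ofReal_one, mul_one]
    have step5 : ∫⁻ l : ℝ, ENNReal.ofReal (w l) = 1 := by
      rw [← ofReal_integral_eq_lintegral_ofReal (mix_density_integrable hσ hρ)
        (Filter.Eventually.of_forall hw0), mix_density_integral hσ hρ, ENNReal.ofReal_one]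
    have hfinal : ENNReal.ofReal (1/α) * P An ≤ 1 := by
      calc ENNReal.ofReal (1/α) * P An
          ≤ ∫⁻ ω, ENNReal.ofReal (stoppedValue M τn ω) ∂P := step1
        _ = _ := step2
        _ = _ := step3
        _ ≤ ∫⁻ l : ℝ, ENNReal.ofReal (w l) := lintegral_mono step4
        _ = 1 := step5
    have h1 : P An ≤ (ENNReal.ofReal (1/α))⁻¹ :=
      ENNReal.le_inv_iff_mul_le.2 (by rwa [mul_comm] at hfinal)
    rwa [one_div, ENNReal.ofReal_inv_of_pos hα0, inv_inv] at h1
  -- conclude by continuity from below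
  have hsubset : {ω | ∃ t : ℕ, 1 ≤ t ∧
      σ * Real.sqrt ((((t : ℝ) * ρ^2 + 1) / ((t : ℝ)^2 * ρ^2)) *
          Real.log (((t : ℝ) * ρ^2 + 1) / α^2))
        ≤ |(∑ i ∈ Finset.Icc 1 t, X i ω) / (t : ℝ) - μ|}
      ⊆ ⋃ n : ℕ, {ω | ∃ t : ℕ, 1 ≤ t ∧ t ≤ n ∧ 1/α ≤ M t ω} := by
    rintro ω ⟨t, ht1, hineq⟩
    have htpos : (0:ℝ) < (t:ℝ) := by exact_mod_cast ht1
    have e : (∑ i ∈ Finset.Icc 1 t, X i ω) / (t : ℝ) - μ = S t ω / (t:ℝ) := by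
      rw [hS_def]
      field_simp
    rw [e, abs_div, abs_of_pos htpos] at hineq
    have hM := event_imp hσ hρ hα0 hα1 t ht1 (S t ω) hineq
    exact Set.mem_iUnion.2 ⟨t, t, ht1, le_rfl, hM⟩
  have hdir : Directed (· ⊆ ·) (fun n : ℕ => {ω | ∃ t : ℕ, 1 ≤ t ∧ t ≤ n ∧ 1/α ≤ M t ω}) := by
    refine (Monotone.directed_le ?_)
    intro a b hab ω hω
    obtain ⟨t, ht1, htn, htM⟩ := hω
    exact ⟨t, ht1, htn.trans hab, htM⟩
  refine le_trans (measure_mono hsubset) ?_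
  rw [Directed.measure_iUnion hdir]
  exact iSup_le hAn
end

section
/- Catoni-style heavy-tailed supermartingale: define φ : ℝ → ℝ by φ(x) = log(1 + x + x²/2) for x ≥ 0 and φ(x) = −log(1 − x + x²/2) for x < 0. Let (X_t)_{t≥1} be an adapted real-valued process such that for every t, X_t and X_t² are conditionally integrable, E[X_t | 𝓕_{t−1}] = μ a.s. and E[(X_t − μ)² | 𝓕_{t−1}] ≤ σ² a.s. Then for every fixed λ ∈ ℝ, L_t := exp( Σ_{i=1}^t φ(λ(X_i − μ)) − t·λ²σ²/2 ), with L_0 := 1, is a test supermartingale with respect to (𝓕_t). -/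
open MeasureTheory Filter
open scoped ENNReal

/-- Catoni's influence function: `φ(x) = log(1 + x + x²/2)` for `x ≥ 0` and
`φ(x) = -log(1 - x + x²/2)` for `x < 0`. -/
noncomputable def catoniPhi (x : ℝ) : ℝ :=
  if 0 ≤ x then Real.log (1 + x + x^2/2) else -Real.log (1 - x + x^2/2)

lemma measurable_catoniPhi : Measurable catoniPhi := by
  unfold catoniPhi
  refine Measurable.ite measurableSet_Ici ?_ ?_
  · exact Real.measurable_log.comp (by fun_prop)
  · exact (Real.measurable_log.comp (by fun_prop)).neg

lemma exp_catoniPhi_le (x : ℝ) : Real.exp (catoniPhi x) ≤ 1 + x + x^2/2 := by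
  unfold catoniPhi
  have h1 : (0:ℝ) < 1 + x + x^2/2 := by nlinarith [sq_nonneg (x+1)]
  have h2 : (0:ℝ) < 1 - x + x^2/2 := by nlinarith [sq_nonneg (x-1)]
  split_ifs with h
  · rw [Real.exp_log h1]
  · rw [Real.exp_neg, Real.exp_log h2, inv_eq_one_div, div_le_iff₀ h2]
    nlinarith [sq_nonneg (x^2)]

lemma integrable_mul_of_condexp_le {Ω : Type*} {m m0 : MeasurableSpace Ω}
    {P : Measure Ω} [IsProbabilityMeasure P] (hm : m ≤ m0)
    {f g : Ω → ℝ} {C : ℝ} (hC : 0 ≤ C)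
    (hf : StronglyMeasurable[m] f) (hfi : Integrable f P) (hf0 : ∀ ω, 0 ≤ f ω)
    (hgi : Integrable g P) (hg0 : ∀ ω, 0 ≤ g ω)
    (hbound : P[g|m] ≤ᵐ[P] fun _ => C) :
    Integrable (fun ω => f ω * g ω) P := by
  set fn : ℕ → Ω → ℝ := fun n ω => min (f ω) n with hfn
  have hfnm : ∀ n, StronglyMeasurable[m] (fn n) := fun n => (continuous_id.min continuous_const).comp_stronglyMeasurable hf
  have hfn0 : ∀ n ω, 0 ≤ fn n ω := fun n ω => le_min (hf0 ω) (n.cast_nonneg)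
  have hfnle : ∀ n ω, fn n ω ≤ f ω := fun n ω => min_le_left _ _
  have hfnbd : ∀ n ω, ‖fn n ω‖ ≤ (n:ℝ) := by
    intro n ω; rw [Real.norm_eq_abs, abs_of_nonneg (hfn0 n ω)]; exact min_le_right _ _
  have hfng_int : ∀ n, Integrable (fun ω => fn n ω * g ω) P := fun n =>
    hgi.bdd_mul ((hfnm n).mono hm).aestronglyMeasurable (ae_of_all _ (hfnbd n))
  have hfn_int : ∀ n, Integrable (fn n) P := by
    intro n
    refine hfi.mono ((hfnm n).mono hm).aestronglyMeasurable (ae_of_all _ fun ω => ?_)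
    rw [Real.norm_eq_abs, Real.norm_eq_abs, abs_of_nonneg (hfn0 n ω), abs_of_nonneg (hf0 ω)]
    exact hfnle n ω
  have hbd : ∀ n, ∫ ω, fn n ω * g ω ∂P ≤ C * ∫ ω, f ω ∂P := by
    intro n
    have h2 : P[fun ω => fn n ω * g ω|m] =ᵐ[P] fun ω => fn n ω * (P[g|m]) ω :=
      condExp_mul_of_stronglyMeasurable_left (hfnm n) (hfng_int n) hgi
    calc ∫ ω, fn n ω * g ω ∂P = ∫ ω, (P[fun ω => fn n ω * g ω|m]) ω ∂P :=
          (integral_condExp hm).symm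
      _ = ∫ ω, fn n ω * (P[g|m]) ω ∂P := integral_congr_ae h2
      _ ≤ ∫ ω, C * fn n ω ∂P := by
          refine integral_mono_ae
            (integrable_condExp.bdd_mul ((hfnm n).mono hm).aestronglyMeasurable (ae_of_all _ (hfnbd n)))
            ((hfn_int n).const_mul C) ?_
          filter_upwards [hbound] with ω hω
          calc fn n ω * (P[g|m]) ω ≤ fn n ω * C :=
                mul_le_mul_of_nonneg_left hω (hfn0 n ω)
            _ = C * fn n ω := mul_comm _ _
      _ = C * ∫ ω, fn n ω ∂P := integral_const_mul _ _
      _ ≤ C * ∫ ω, f ω ∂P := by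
          exact mul_le_mul_of_nonneg_left
            (integral_mono (hfn_int n) hfi (fun ω => hfnle n ω)) hC
  refine ⟨((hf.mono hm).aestronglyMeasurable).mul hgi.1, ?_⟩
  rw [hasFiniteIntegral_iff_ofReal (ae_of_all _ fun ω => mul_nonneg (hf0 ω) (hg0 ω))]
  have hmono : ∀ ω, Monotone fun n => ENNReal.ofReal (fn n ω * g ω) := by
    intro ω a b hab
    exact ENNReal.ofReal_le_ofReal
      (mul_le_mul_of_nonneg_right (min_le_min le_rfl (Nat.cast_le.2 hab)) (hg0 ω))
  have hsup : ∀ ω, (⨆ n, ENNReal.ofReal (fn n ω * g ω)) = ENNReal.ofReal (f ω * g ω) := by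
    intro ω
    apply le_antisymm
    · exact iSup_le fun n => ENNReal.ofReal_le_ofReal
        (mul_le_mul_of_nonneg_right (hfnle n ω) (hg0 ω))
    · refine le_iSup_of_le ⌈f ω⌉₊ ?_
      have h : fn ⌈f ω⌉₊ ω = f ω := min_eq_left (Nat.le_ceil _)
      rw [h]
  have hlin : ∫⁻ ω, ENNReal.ofReal (f ω * g ω) ∂P
      = ⨆ n, ∫⁻ ω, ENNReal.ofReal (fn n ω * g ω) ∂P := by
    rw [← lintegral_iSup' (fun n => ((hfng_int n).1.aemeasurable.ennreal_ofReal))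
      (ae_of_all _ hmono)]
    exact lintegral_congr fun ω => (hsup ω).symm
  rw [hlin]
  have hfin : ∀ n, ∫⁻ ω, ENNReal.ofReal (fn n ω * g ω) ∂P
      ≤ ENNReal.ofReal (C * ∫ ω, f ω ∂P) := by
    intro n
    rw [← ofReal_integral_eq_lintegral_ofReal (hfng_int n)
      (ae_of_all _ fun ω => mul_nonneg (hfn0 n ω) (hg0 ω))]
    exact ENNReal.ofReal_le_ofReal (hbd n)
  exact lt_of_le_of_lt (iSup_le hfin) ENNReal.ofReal_lt_top

/-- **Catoni-style heavy-tailed supermartingale**: if each `X t` (for `t ≥ 1`) has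
conditional mean `μ` and conditional variance at most `σ²` given `ℱ (t-1)`, then
for every fixed `λ`, `L t = exp (∑_{i=1}^t φ(λ(X i - μ)) - t λ² σ² / 2)` is a
test supermartingale. -/
theorem catoni_heavy_tailed_supermartingale
    {Ω : Type*} {m0 : MeasurableSpace Ω} {P : Measure Ω} [IsProbabilityMeasure P]
    {ℱ : Filtration ℕ m0}
    (X : ℕ → Ω → ℝ) (hX : ∀ t, 1 ≤ t → StronglyMeasurable[ℱ t] (X t))
    (μ σ : ℝ) (hσ : 0 < σ)
    (hint1 : ∀ t, 1 ≤ t → Integrable (X t) P)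
    (hint2 : ∀ t, 1 ≤ t → Integrable (fun ω => (X t ω)^2) P)
    (hmean : ∀ t, 1 ≤ t → P[X t|ℱ (t-1)] =ᵐ[P] fun _ => μ)
    (hvar : ∀ t, 1 ≤ t → P[fun ω => (X t ω - μ)^2|ℱ (t-1)] ≤ᵐ[P] fun _ => σ^2)
    (lam : ℝ) (L : ℕ → Ω → ℝ)
    (hL : ∀ t ω, L t ω = Real.exp
        ((∑ i ∈ Finset.Icc 1 t, catoniPhi (lam * (X i ω - μ)))
          - (t : ℝ) * lam^2 * σ^2 / 2)) :
    Supermartingale L ℱ P ∧ (∀ t ω, 0 ≤ L t ω) ∧ (∀ ω, L 0 ω = 1) := by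
  have hL0 : ∀ ω, L 0 ω = 1 := by intro ω; rw [hL]; simp
  have hLpos : ∀ t ω, 0 ≤ L t ω := fun t ω => by rw [hL]; exact (Real.exp_pos _).le
  set c : ℝ := lam^2 * σ^2 / 2 with hcdef
  have hc0 : 0 ≤ c := by positivity
  set g : ℕ → Ω → ℝ := fun s ω => Real.exp (catoniPhi (lam * (X s ω - μ)) - c) with hgdef
  set h : ℕ → Ω → ℝ := fun s ω =>
    Real.exp (-c) + (Real.exp (-c) * lam) * (X s ω - μ)
      + (Real.exp (-c) * (lam^2/2)) * (X s ω - μ)^2 with hhdef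
  have hg0 : ∀ s ω, 0 ≤ g s ω := fun s ω => (Real.exp_pos _).le
  have hgh : ∀ s ω, g s ω ≤ h s ω := by
    intro s ω
    have h1 : g s ω = Real.exp (-c) * Real.exp (catoniPhi (lam * (X s ω - μ))) := by
      rw [hgdef, ← Real.exp_add]; ring_nf
    have h2 := exp_catoniPhi_le (lam * (X s ω - μ))
    calc g s ω = Real.exp (-c) * Real.exp (catoniPhi (lam * (X s ω - μ))) := h1
      _ ≤ Real.exp (-c) * (1 + lam * (X s ω - μ) + (lam * (X s ω - μ))^2/2) :=
          mul_le_mul_of_nonneg_left h2 (Real.exp_nonneg _)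
      _ = h s ω := by rw [hhdef]; ring
  have hq2int : ∀ s, 1 ≤ s → Integrable (fun ω => (X s ω - μ)^2) P := by
    intro s hs
    have : (fun ω => (X s ω - μ)^2)
        = fun ω => ((X s ω)^2 - (2*μ) * X s ω) + μ^2 := by funext ω; ring
    rw [this]
    exact (((hint2 s hs).sub ((hint1 s hs).const_mul (2*μ))).add (integrable_const _))
  have hhint : ∀ s, 1 ≤ s → Integrable (h s) P := by
    intro s hs
    rw [hhdef]
    exact ((integrable_const _).add
      (((hint1 s hs).sub (integrable_const μ)).const_mul _)).add ((hq2int s hs).const_mul _)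
  have hgm : ∀ s, 1 ≤ s → StronglyMeasurable[ℱ s] (g s) := by
    intro s hs
    apply Measurable.stronglyMeasurable
    exact Real.measurable_exp.comp
      ((measurable_catoniPhi.comp
        (((hX s hs).measurable.sub measurable_const).const_mul lam)).sub measurable_const)
  have hgint : ∀ s, 1 ≤ s → Integrable (g s) P := by
    intro s hs
    refine (hhint s hs).mono' ((hgm s hs).mono (ℱ.le s)).aestronglyMeasurable
      (ae_of_all _ fun ω => ?_)
    rw [Real.norm_eq_abs, abs_of_nonneg (hg0 s ω)]
    exact hgh s ω
  have hgc : ∀ t : ℕ, P[g (t+1)|ℱ t] ≤ᵐ[P] fun _ => (1:ℝ) := by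
    intro t
    have hs : 1 ≤ t + 1 := Nat.le_add_left 1 t
    have hmean' : P[X (t+1)|ℱ t] =ᵐ[P] fun _ => μ := by
      have := hmean (t+1) hs; simpa using this
    have hvar' : P[fun ω => (X (t+1) ω - μ)^2|ℱ t] ≤ᵐ[P] fun _ => σ^2 := by
      have := hvar (t+1) hs; simpa using this
    set q : Ω → ℝ := fun ω => X (t+1) ω - μ with hqdef
    set q2 : Ω → ℝ := fun ω => (X (t+1) ω - μ)^2 with hq2def
    have hqint : Integrable q P := (hint1 (t+1) hs).sub (integrable_const μ)
    have hq2int' : Integrable q2 P := hq2int (t+1) hs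
    have hqce : P[q|ℱ t] =ᵐ[P] fun _ => (0:ℝ) := by
      have h1 : P[q|ℱ t] =ᵐ[P] P[X (t+1)|ℱ t] - P[fun _ => μ|ℱ t] :=
        condExp_sub (hint1 (t+1) hs) (integrable_const μ) _
      have h2 : P[fun _ : Ω => μ|ℱ t] = fun _ => μ := condExp_const (ℱ.le t) μ
      filter_upwards [h1, hmean'] with ω h1ω h2ω
      rw [h1ω]; simp [h2, Pi.sub_apply, h2ω]
    have h_eq : h (t+1) = (fun _ => Real.exp (-c))
        + ((Real.exp (-c) * lam) • q + (Real.exp (-c) * (lam^2/2)) • q2) := by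
      funext ω
      simp only [hhdef, hqdef, hq2def, Pi.add_apply, Pi.smul_apply, smul_eq_mul]
      ring
    have hce_h : P[h (t+1)|ℱ t] =ᵐ[P] (fun _ => Real.exp (-c))
        + ((Real.exp (-c) * lam) • P[q|ℱ t] + (Real.exp (-c) * (lam^2/2)) • P[q2|ℱ t]) := by
      rw [h_eq]
      refine (condExp_add (integrable_const _) ((hqint.smul _).add (hq2int'.smul _)) _).trans ?_
      have h3 : P[(fun _ : Ω => Real.exp (-c))|ℱ t] = fun _ => Real.exp (-c) :=
        condExp_const (ℱ.le t) _
      rw [h3]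
      refine EventuallyEq.add (EventuallyEq.refl _ _) ?_
      refine (condExp_add (hqint.smul _) (hq2int'.smul _) _).trans ?_
      exact EventuallyEq.add (condExp_smul _ _ _) (condExp_smul _ _ _)
    have hgle : P[g (t+1)|ℱ t] ≤ᵐ[P] P[h (t+1)|ℱ t] :=
      condExp_mono (hgint (t+1) hs) (hhint (t+1) hs) (ae_of_all _ fun ω => hgh (t+1) ω)
    filter_upwards [hgle, hce_h, hqce, hvar'] with ω h1 h2 h3 h4
    have e0 : 0 ≤ Real.exp (-c) * (lam^2/2) := by positivity
    have key : Real.exp (-c) + Real.exp (-c) * (lam^2/2) * σ^2 ≤ 1 := by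
      have h5 : c + 1 ≤ Real.exp c := Real.add_one_le_exp c
      have h6 : Real.exp (-c) * Real.exp c = 1 := by
        rw [← Real.exp_add]; simp
      have h7 : Real.exp (-c) + Real.exp (-c) * (lam^2/2) * σ^2
          = Real.exp (-c) * (1 + c) := by rw [hcdef]; ring
      rw [h7, ← h6]
      exact mul_le_mul_of_nonneg_left (by linarith) (Real.exp_nonneg _)
    calc (P[g (t+1)|ℱ t]) ω ≤ (P[h (t+1)|ℱ t]) ω := h1
      _ = Real.exp (-c) + (Real.exp (-c) * lam) * (P[q|ℱ t]) ω
            + (Real.exp (-c) * (lam^2/2)) * (P[q2|ℱ t]) ω := by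
          rw [h2]; simp [Pi.add_apply, Pi.smul_apply, smul_eq_mul]; ring
      _ ≤ Real.exp (-c) + Real.exp (-c) * (lam^2/2) * σ^2 := by
          rw [h3]
          have := mul_le_mul_of_nonneg_left h4 e0
          simp only [mul_zero]
          linarith
      _ ≤ 1 := key
  have hsplit : ∀ t : ℕ, L (t+1) = L t * g (t+1) := by
    intro t
    funext ω
    show L (t+1) ω = L t ω * g (t+1) ω
    rw [hL, hL, hgdef, ← Real.exp_add]
    congr 1
    rw [Finset.sum_Icc_succ_top (Nat.le_add_left 1 t)]
    push_cast
    ring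
  have hLm : ∀ t, StronglyMeasurable[ℱ t] (L t) := by
    intro t
    have hfe : L t = fun ω => Real.exp
        ((∑ i ∈ Finset.Icc 1 t, catoniPhi (lam * (X i ω - μ))) - (t:ℝ)*lam^2*σ^2/2) :=
      funext (hL t)
    rw [hfe]
    apply Measurable.stronglyMeasurable
    apply Real.measurable_exp.comp
    apply Measurable.sub _ measurable_const
    apply Finset.measurable_sum
    intro i hi
    have hi1 : 1 ≤ i := (Finset.mem_Icc.mp hi).1
    have hit : i ≤ t := (Finset.mem_Icc.mp hi).2
    exact measurable_catoniPhi.comp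
      ((((hX i hi1).mono (ℱ.mono hit)).measurable.sub measurable_const).const_mul lam)
  have hLint : ∀ t, Integrable (L t) P := by
    intro t
    induction t with
    | zero =>
      have : L 0 = fun _ => (1:ℝ) := funext hL0
      rw [this]; exact integrable_const 1
    | succ t ih =>
      rw [hsplit t]
      exact integrable_mul_of_condexp_le (ℱ.le t) zero_le_one (hLm t) ih (hLpos t)
        (hgint (t+1) (Nat.le_add_left 1 t)) (hg0 (t+1)) (hgc t)
  refine ⟨?_, hLpos, hL0⟩
  refine supermartingale_nat hLm hLint ?_
  intro t
  have hint_mul : Integrable (L t * g (t+1)) P := by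
    rw [← hsplit t]; exact hLint (t+1)
  have e2 : P[L (t+1)|ℱ t] =ᵐ[P] L t * P[g (t+1)|ℱ t] := by
    rw [hsplit t]
    exact condExp_mul_of_stronglyMeasurable_left (hLm t) hint_mul (hgint (t+1) (Nat.le_add_left 1 t))
  filter_upwards [e2, hgc t] with ω h1 h2
  rw [h1]
  calc L t ω * (P[g (t+1)|ℱ t]) ω ≤ L t ω * 1 :=
        mul_le_mul_of_nonneg_left h2 (hLpos t ω)
    _ = L t ω := mul_one _
end

section
/- Empirical-Bernstein supermartingale: let ψ(λ) := −log(1−λ) − λ for λ ∈ [0,1). Let (X_t)_{t≥1} be an adapted process with X_t ∈ [0,1] a.s. and E[X_t | 𝓕_{t−1}] = μ a.s. for every t, where μ ∈ [0,1]. Let (λ_t)_{t≥1} and (μ̂_t)_{t≥1} be predictable processes with λ_t ∈ [0,1) and μ̂_t ∈ [0,1] a.s. Then N_t := exp( Σ_{i=1}^t ( λ_i(X_i − μ) − ψ(λ_i)(X_i − μ̂_i)² ) ), with N_0 := 1, is a test supermartingale with respect to (𝓕_t). -/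
open MeasureTheory Filter
open scoped ENNReal

/-- `ψ(λ) = -log(1-λ) - λ`, the log-MGF of a centered unit-rate exponential. -/
noncomputable def psiEB (l : ℝ) : ℝ := -Real.log (1 - l) - l

lemma psiEB_nonneg {l : ℝ} (h0 : 0 ≤ l) (h1 : l < 1) : 0 ≤ psiEB l := by
  have h : Real.log (1 - l) ≤ (1 - l) - 1 := Real.log_le_sub_one_of_pos (by linarith)
  simp only [psiEB]; linarith

lemma fan_ineq {c l : ℝ} (hc : -1 ≤ c) (h0 : 0 ≤ l) (h1 : l < 1) :
    Real.exp (l * c - psiEB l * c ^ 2) ≤ 1 + l * c := by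
  have hpos : ∀ x ∈ Set.Icc (0:ℝ) l, 0 < 1 + x * c := by
    intro x hx
    rcases le_or_gt 0 c with h | h
    · nlinarith [hx.1]
    · nlinarith [hx.2, hx.1]
  set φ : ℝ → ℝ := fun x => Real.log (1 + x * c) - x * c + psiEB x * c ^ 2 with hφ
  have hderiv : ∀ x ∈ Set.Icc (0:ℝ) l, HasDerivAt φ
      (c / (1 + x * c) - c + (1 / (1 - x) - 1) * c ^ 2) x := by
    intro x hx
    have ha : (0:ℝ) < 1 + x * c := hpos x hx
    have hb : (0:ℝ) < 1 - x := by have := hx.2; linarith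
    have h1' : HasDerivAt (fun x : ℝ => 1 + x * c) c x := by
      simpa using ((hasDerivAt_id x).mul_const c).const_add 1
    have hlog1 : HasDerivAt (fun x : ℝ => Real.log (1 + x * c)) (c / (1 + x * c)) x :=
      h1'.log ha.ne'
    have h2' : HasDerivAt (fun x : ℝ => 1 - x) (-1) x := by
      simpa using (hasDerivAt_id x).const_sub 1
    have hlog2 : HasDerivAt (fun x : ℝ => Real.log (1 - x)) (-1 / (1 - x)) x :=
      h2'.log hb.ne'
    have hpsi : HasDerivAt psiEB (1 / (1 - x) - 1) x := by
      have h3 : HasDerivAt psiEB (-(-1 / (1 - x)) - 1) x := (hlog2.neg).sub (hasDerivAt_id' x)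
      convert h3 using 1; ring
    have h4 : HasDerivAt φ (c / (1 + x * c) - 1 * c + (1 / (1 - x) - 1) * c ^ 2) x :=
      (hlog1.sub ((hasDerivAt_id' x).mul_const c)).add (hpsi.mul_const (c ^ 2))
    convert h4 using 1; ring
  have hmono : φ 0 ≤ φ l := by
    rcases eq_or_lt_of_le h0 with h | h
    · rw [← h]
    · have hcont : ContinuousOn φ (Set.Icc 0 l) := fun x hx =>
        (hderiv x hx).continuousAt.continuousWithinAt
      have key : ∀ x ∈ Set.Ioo (0:ℝ) l, 0 ≤ deriv φ x := by
        intro x hx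
        have hx' : x ∈ Set.Icc (0:ℝ) l := ⟨hx.1.le, hx.2.le⟩
        rw [(hderiv x hx').deriv]
        have ha : (0:ℝ) < 1 + x * c := hpos x hx'
        have hb : (0:ℝ) < 1 - x := by have := hx'.2; linarith
        have heq : c / (1 + x * c) - c + (1 / (1 - x) - 1) * c ^ 2
            = x ^ 2 * c ^ 2 * (c + 1) / ((1 - x) * (1 + x * c)) := by
          rw [eq_div_iff (mul_pos hb ha).ne']
          linear_combination (c * (1 - x)) * mul_inv_cancel₀ ha.ne' + (c ^ 2 * (1 + x * c)) * mul_inv_cancel₀ hb.ne'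
        rw [heq]
        apply div_nonneg
        · have : (0:ℝ) ≤ c + 1 := by linarith
          positivity
        · positivity
      have hdiff : DifferentiableOn ℝ φ (interior (Set.Icc 0 l)) := by
        rw [interior_Icc]
        exact fun x hx =>
          ((hderiv x ⟨hx.1.le, hx.2.le⟩).differentiableAt).differentiableWithinAt
      have hmon := monotoneOn_of_deriv_nonneg (convex_Icc 0 l) hcont hdiff
        (by rw [interior_Icc]; exact key)
      exact hmon (Set.left_mem_Icc.2 h0) (Set.right_mem_Icc.2 h0) h0
  have hφ0 : φ 0 = 0 := by simp [hφ, psiEB]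
  have hlog : l * c - psiEB l * c ^ 2 ≤ Real.log (1 + l * c) := by
    have := hmono
    rw [hφ0] at this
    simp only [hφ] at this
    linarith
  calc Real.exp (l * c - psiEB l * c ^ 2) ≤ Real.exp (Real.log (1 + l * c)) :=
        Real.exp_le_exp.2 hlog
    _ = 1 + l * c := Real.exp_log (hpos l (Set.right_mem_Icc.2 h0))

/-- **Empirical-Bernstein supermartingale**: if `X t ∈ [0,1]` a.s. with conditional
mean `μ`, and `(λ t)`, `(μ̂ t)` are predictable with `λ t ∈ [0,1)`, `μ̂ t ∈ [0,1]`
a.s., then `N t = exp (∑_{i=1}^t (λ i (X i - μ) - ψ(λ i)(X i - μ̂ i)²))` is a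
test supermartingale. -/
theorem empirical_bernstein_supermartingale
    {Ω : Type*} {m0 : MeasurableSpace Ω} {P : Measure Ω} [IsProbabilityMeasure P]
    {ℱ : Filtration ℕ m0}
    (μ : ℝ) (hμ : μ ∈ Set.Icc (0:ℝ) 1)
    (X : ℕ → Ω → ℝ) (hX : ∀ t, 1 ≤ t → StronglyMeasurable[ℱ t] (X t))
    (hXb : ∀ t, 1 ≤ t → ∀ᵐ ω ∂P, X t ω ∈ Set.Icc (0:ℝ) 1)
    (hmean : ∀ t, 1 ≤ t → P[X t|ℱ (t-1)] =ᵐ[P] fun _ => μ)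
    (lam : ℕ → Ω → ℝ) (hlam : ∀ t, 1 ≤ t → StronglyMeasurable[ℱ (t-1)] (lam t))
    (hlamb : ∀ t, 1 ≤ t → ∀ᵐ ω ∂P, lam t ω ∈ Set.Ico (0:ℝ) 1)
    (muhat : ℕ → Ω → ℝ) (hmuhat : ∀ t, 1 ≤ t → StronglyMeasurable[ℱ (t-1)] (muhat t))
    (hmuhatb : ∀ t, 1 ≤ t → ∀ᵐ ω ∂P, muhat t ω ∈ Set.Icc (0:ℝ) 1)
    (N : ℕ → Ω → ℝ)
    (hN : ∀ t ω, N t ω = Real.exp (∑ i ∈ Finset.Icc 1 t,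
        (lam i ω * (X i ω - μ) - psiEB (lam i ω) * (X i ω - muhat i ω)^2))) :
    Supermartingale N ℱ P ∧ (∀ t ω, 0 ≤ N t ω) ∧ (∀ ω, N 0 ω = 1) := by
  -- the summand
  set f : ℕ → Ω → ℝ := fun i ω =>
    lam i ω * (X i ω - μ) - psiEB (lam i ω) * (X i ω - muhat i ω) ^ 2 with hf
  -- measurability of summands
  have hmeas_f : ∀ i t, 1 ≤ i → i ≤ t → Measurable[ℱ t] (f i) := by
    intro i t hi hit
    have hl : Measurable[ℱ t] (lam i) :=
      ((hlam i hi).measurable).mono (ℱ.mono ((Nat.sub_le i 1).trans hit)) le_rfl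
    have hm : Measurable[ℱ t] (muhat i) :=
      ((hmuhat i hi).measurable).mono (ℱ.mono ((Nat.sub_le i 1).trans hit)) le_rfl
    have hx : Measurable[ℱ t] (X i) :=
      ((hX i hi).measurable).mono (ℱ.mono hit) le_rfl
    have hps : Measurable[ℱ t] (fun ω => psiEB (lam i ω)) := by
      unfold psiEB
      exact ((Real.measurable_log.comp (measurable_const.sub hl)).neg).sub hl
    exact (hl.mul (hx.sub measurable_const)).sub
      (hps.mul ((hx.sub hm).pow_const 2))
  have hmeas_N : ∀ t, StronglyMeasurable[ℱ t] (N t) := by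
    intro t
    have : N t = fun ω => Real.exp (∑ i ∈ Finset.Icc 1 t, f i ω) := funext fun ω => hN t ω
    rw [this]
    exact (Real.measurable_exp.comp (Finset.measurable_sum _ fun i hi =>
      hmeas_f i t (Finset.mem_Icc.1 hi).1 (Finset.mem_Icc.1 hi).2)).stronglyMeasurable
  -- master a.e. event
  have hE : ∀ᵐ ω ∂P, ∀ i, 1 ≤ i →
      (X i ω ∈ Set.Icc (0:ℝ) 1 ∧ lam i ω ∈ Set.Ico (0:ℝ) 1 ∧ muhat i ω ∈ Set.Icc (0:ℝ) 1) := by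
    rw [ae_all_iff]
    intro i
    by_cases hi : 1 ≤ i
    · filter_upwards [hXb i hi, hlamb i hi, hmuhatb i hi] with ω h1 h2 h3 _
      exact ⟨h1, h2, h3⟩
    · filter_upwards with ω h; exact absurd h hi
  -- pointwise bounds under the good event
  have hf_le_one : ∀ ω, (∀ i, 1 ≤ i →
      (X i ω ∈ Set.Icc (0:ℝ) 1 ∧ lam i ω ∈ Set.Ico (0:ℝ) 1 ∧ muhat i ω ∈ Set.Icc (0:ℝ) 1)) →
      ∀ i, 1 ≤ i → f i ω ≤ 1 := by
    intro ω hω i hi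
    obtain ⟨hx, hl, _⟩ := hω i hi
    have hpsi : 0 ≤ psiEB (lam i ω) := psiEB_nonneg hl.1 hl.2
    have h1 : lam i ω * (X i ω - μ) ≤ 1 := by
      nlinarith [hx.1, hx.2, hμ.1, hμ.2, hl.1, hl.2]
    have h2 := mul_nonneg hpsi (sq_nonneg (X i ω - muhat i ω))
    simp only [hf]
    linarith
  have hN_bound : ∀ t, ∀ᵐ ω ∂P, ‖N t ω‖ ≤ Real.exp t := by
    intro t
    filter_upwards [hE] with ω hω
    rw [hN t ω, Real.norm_eq_abs, abs_of_pos (Real.exp_pos _), Real.exp_le_exp]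
    calc ∑ i ∈ Finset.Icc 1 t, f i ω ≤ ∑ i ∈ Finset.Icc 1 t, (1:ℝ) :=
          Finset.sum_le_sum fun i hi => hf_le_one ω hω i (Finset.mem_Icc.1 hi).1
      _ = t := by simp
  have hint_N : ∀ t, Integrable (N t) P := fun t =>
    Integrable.mono' (integrable_const (Real.exp t))
      ((hmeas_N t).mono (ℱ.le t)).aestronglyMeasurable (hN_bound t)
  refine ⟨?_, fun t ω => (hN t ω) ▸ (Real.exp_pos _).le, fun ω => by simp [hN 0 ω]⟩
  refine supermartingale_nat (fun t => hmeas_N t) hint_N ?_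
  intro t
  have ht1 : 1 ≤ t + 1 := Nat.le_add_left 1 t
  -- predictable data at time t+1 are ℱ t measurable
  have hl' : StronglyMeasurable[ℱ t] (lam (t+1)) := by
    have := hlam (t+1) ht1; simpa using this
  have hm' : StronglyMeasurable[ℱ t] (muhat (t+1)) := by
    have := hmuhat (t+1) ht1; simpa using this
  set G : Ω → ℝ := fun ω =>
    N t ω * Real.exp (lam (t+1) ω * (muhat (t+1) ω - μ)) * (1 - lam (t+1) ω * muhat (t+1) ω)
    with hG
  set H : Ω → ℝ := fun ω =>
    N t ω * Real.exp (lam (t+1) ω * (muhat (t+1) ω - μ)) * lam (t+1) ω with hH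
  have hmeasE : Measurable[ℱ t] (fun ω => Real.exp (lam (t+1) ω * (muhat (t+1) ω - μ))) :=
    Real.measurable_exp.comp (hl'.measurable.mul (hm'.measurable.sub measurable_const))
  have hG_meas : StronglyMeasurable[ℱ t] G :=
    (((hmeas_N t).measurable.mul hmeasE).mul
      (measurable_const.sub (hl'.measurable.mul hm'.measurable))).stronglyMeasurable
  have hH_meas : StronglyMeasurable[ℱ t] H :=
    (((hmeas_N t).measurable.mul hmeasE).mul hl'.measurable).stronglyMeasurable
  -- a.e. bounds on building blocks
  have hblocks : ∀ᵐ ω ∂P, ‖N t ω‖ ≤ Real.exp t ∧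
      (X (t+1) ω ∈ Set.Icc (0:ℝ) 1 ∧ lam (t+1) ω ∈ Set.Ico (0:ℝ) 1 ∧
        muhat (t+1) ω ∈ Set.Icc (0:ℝ) 1) := by
    filter_upwards [hN_bound t, hE] with ω h1 h2 using ⟨h1, h2 (t+1) ht1⟩
  have hC : ∀ᵐ ω ∂P, ‖G ω‖ ≤ Real.exp (t+1) ∧ ‖H ω * X (t+1) ω‖ ≤ Real.exp (t+1) := by
    filter_upwards [hblocks] with ω hω
    obtain ⟨hn, hx, hl, hm⟩ := hω
    rw [Real.norm_eq_abs] at hn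
    have hE1 : Real.exp (lam (t+1) ω * (muhat (t+1) ω - μ)) ≤ Real.exp 1 := by
      rw [Real.exp_le_exp]
      nlinarith [hl.1, hl.2, hm.1, hm.2, hμ.1, hμ.2,
        mul_nonneg hl.1 (by linarith [hm.2, hμ.1] : (0:ℝ) ≤ 1 - (muhat (t+1) ω - μ))]
    have hE0 : (0:ℝ) < Real.exp (lam (t+1) ω * (muhat (t+1) ω - μ)) := Real.exp_pos _
    have hNnn : 0 ≤ N t ω := (hN t ω) ▸ (Real.exp_pos _).le
    have hNle : N t ω ≤ Real.exp t := (le_abs_self _).trans hn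
    have habc : ∀ c : ℝ, |c| ≤ 1 →
        |N t ω * Real.exp (lam (t+1) ω * (muhat (t+1) ω - μ)) * c| ≤ Real.exp ((t:ℝ)+1) := by
      intro c hc
      rw [abs_mul, abs_mul, abs_of_nonneg hNnn, abs_of_pos hE0]
      rw [show Real.exp ((t:ℝ)+1) = Real.exp t * Real.exp 1 from by rw [← Real.exp_add]]
      calc N t ω * Real.exp (lam (t+1) ω * (muhat (t+1) ω - μ)) * |c|
          ≤ Real.exp t * Real.exp 1 * 1 := by
            have h1 : N t ω * Real.exp (lam (t+1) ω * (muhat (t+1) ω - μ))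
                ≤ Real.exp t * Real.exp 1 :=
              mul_le_mul hNle hE1 hE0.le (Real.exp_nonneg _)
            exact mul_le_mul h1 hc (abs_nonneg _) (by positivity)
        _ = Real.exp t * Real.exp 1 := by rw [mul_one]
    constructor
    · simp only [hG, Real.norm_eq_abs]
      apply habc
      rw [abs_le]
      have hlm0 : 0 ≤ lam (t+1) ω * muhat (t+1) ω := mul_nonneg hl.1 hm.1
      have hlm1 : lam (t+1) ω * muhat (t+1) ω ≤ 1 := by
        nlinarith [hl.2, hm.2, hl.1, hm.1]
      constructor <;> linarith
    · simp only [hH, Real.norm_eq_abs]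
      have : N t ω * Real.exp (lam (t+1) ω * (muhat (t+1) ω - μ)) * lam (t+1) ω * X (t+1) ω
          = N t ω * Real.exp (lam (t+1) ω * (muhat (t+1) ω - μ))
            * (lam (t+1) ω * X (t+1) ω) := by ring
      rw [this]
      apply habc
      rw [abs_of_nonneg (mul_nonneg hl.1 hx.1)]
      nlinarith [hl.2, hx.2, hl.1, hx.1]
  have hmeasHX : Measurable[m0] (fun ω => H ω * X (t+1) ω) :=
    (hH_meas.measurable.mono (ℱ.le t) le_rfl).mul
      ((hX (t+1) ht1).measurable.mono (ℱ.le (t+1)) le_rfl)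
  have hint_HX : Integrable (fun ω => H ω * X (t+1) ω) P :=
    Integrable.mono' (integrable_const (Real.exp (t+1)))
      hmeasHX.aestronglyMeasurable (hC.mono fun ω h => h.2)
  have hint_G : Integrable G P :=
    Integrable.mono' (integrable_const (Real.exp (t+1)))
      ((hG_meas.mono (ℱ.le t)).aestronglyMeasurable) (hC.mono fun ω h => h.1)
  have hint_X : Integrable (X (t+1)) P :=
    Integrable.mono' (integrable_const 1)
      ((hX (t+1) ht1).mono (ℱ.le (t+1))).aestronglyMeasurable
      ((hXb (t+1) ht1).mono fun ω h => by
        rw [Real.norm_eq_abs, abs_le]; exact ⟨by linarith [h.1], h.2⟩)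
  -- key pointwise bound: N (t+1) ≤ G + H * X (t+1)
  have hkey : ∀ᵐ ω ∂P, N (t+1) ω ≤ G ω + H ω * X (t+1) ω := by
    filter_upwards [hblocks] with ω hω
    obtain ⟨hn, hx, hl, hm⟩ := hω
    have hNnn : 0 ≤ N t ω := (hN t ω) ▸ (Real.exp_pos _).le
    have hsplit : N (t+1) ω = N t ω * Real.exp (f (t+1) ω) := by
      rw [hN (t+1) ω, hN t ω, ← Real.exp_add, Finset.sum_Icc_succ_top ht1]
    have hc : -1 ≤ X (t+1) ω - muhat (t+1) ω := by
      have := hx.1; have := hm.2; linarith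
    have hfan := fan_ineq hc hl.1 hl.2
    have hdecomp : Real.exp (f (t+1) ω) =
        Real.exp (lam (t+1) ω * (muhat (t+1) ω - μ)) *
          Real.exp (lam (t+1) ω * (X (t+1) ω - muhat (t+1) ω) -
            psiEB (lam (t+1) ω) * (X (t+1) ω - muhat (t+1) ω) ^ 2) := by
      rw [← Real.exp_add]
      congr 1
      simp only [hf]
      ring
    have hEnn : (0:ℝ) ≤ N t ω * Real.exp (lam (t+1) ω * (muhat (t+1) ω - μ)) := by
      positivity
    calc N (t+1) ω = N t ω * Real.exp (lam (t+1) ω * (muhat (t+1) ω - μ)) *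
          Real.exp (lam (t+1) ω * (X (t+1) ω - muhat (t+1) ω) -
            psiEB (lam (t+1) ω) * (X (t+1) ω - muhat (t+1) ω) ^ 2) := by
          rw [hsplit, hdecomp]; ring
      _ ≤ N t ω * Real.exp (lam (t+1) ω * (muhat (t+1) ω - μ)) *
          (1 + lam (t+1) ω * (X (t+1) ω - muhat (t+1) ω)) :=
          mul_le_mul_of_nonneg_left hfan hEnn
      _ = G ω + H ω * X (t+1) ω := by simp only [hG, hH]; ring
  -- conditional expectation chain
  have step1 : P[N (t+1)|ℱ t] ≤ᵐ[P] P[fun ω => G ω + H ω * X (t+1) ω|ℱ t] :=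
    condExp_mono (hint_N (t+1)) (hint_G.add hint_HX) hkey
  have step2 : P[fun ω => G ω + H ω * X (t+1) ω|ℱ t]
      =ᵐ[P] P[G|ℱ t] + P[fun ω => H ω * X (t+1) ω|ℱ t] :=
    condExp_add hint_G hint_HX _
  have step3 : P[G|ℱ t] =ᵐ[P] G := by
    rw [condExp_of_stronglyMeasurable (ℱ.le t) hG_meas hint_G]
  have step4 : P[fun ω => H ω * X (t+1) ω|ℱ t] =ᵐ[P] H * P[X (t+1)|ℱ t] :=
    condExp_mul_of_stronglyMeasurable_left hH_meas hint_HX hint_X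
  have hmean' : P[X (t+1)|ℱ t] =ᵐ[P] fun _ => μ := by
    have := hmean (t+1) ht1; simpa using this
  have step5 : H * P[X (t+1)|ℱ t] =ᵐ[P] fun ω => H ω * μ :=
    hmean'.mono fun ω h => by simp only [Pi.mul_apply, h]
  -- final a.e. inequality
  have hfinal : (fun ω => G ω + H ω * μ) ≤ᵐ[P] N t := by
    filter_upwards [hblocks] with ω hω
    obtain ⟨hn, hx, hl, hm⟩ := hω
    have hNnn : 0 ≤ N t ω := (hN t ω) ▸ (Real.exp_pos _).le
    have h1 : G ω + H ω * μ = N t ω * Real.exp (lam (t+1) ω * (muhat (t+1) ω - μ)) *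
        (1 + lam (t+1) ω * (μ - muhat (t+1) ω)) := by simp only [hG, hH]; ring
    have h2 : 1 + lam (t+1) ω * (μ - muhat (t+1) ω) ≤
        Real.exp (lam (t+1) ω * (μ - muhat (t+1) ω)) := by
      have := Real.add_one_le_exp (lam (t+1) ω * (μ - muhat (t+1) ω)); linarith
    calc G ω + H ω * μ ≤ N t ω * Real.exp (lam (t+1) ω * (muhat (t+1) ω - μ)) *
          Real.exp (lam (t+1) ω * (μ - muhat (t+1) ω)) := by
          rw [h1]; exact mul_le_mul_of_nonneg_left h2 (by positivity)
      _ = N t ω := by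
          rw [mul_assoc, ← Real.exp_add]
          have : lam (t+1) ω * (muhat (t+1) ω - μ) + lam (t+1) ω * (μ - muhat (t+1) ω) = 0 := by
            ring
          rw [this, Real.exp_zero, mul_one]
  calc P[N (t+1)|ℱ t] ≤ᵐ[P] P[fun ω => G ω + H ω * X (t+1) ω|ℱ t] := step1
    _ =ᵐ[P] fun ω => G ω + H ω * μ := by
        filter_upwards [step2, step3, step4, step5] with ω h2 h3 h4 h5
        rw [h2, Pi.add_apply, h3, h4, h5]
    _ ≤ᵐ[P] N t := hfinal
end

section
/- Fan's inequality: let ψ(λ) := −log(1−λ) − λ. For every real y ≥ −1 and every λ ∈ [0,1), one has exp( λy − ψ(λ) y² ) ≤ 1 + λy; equivalently, λy − ψ(λ)y² ≤ log(1 + λy), with the convention log 0 = −∞. -/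
open scoped ENNReal

/-- **Fan's inequality**: with `ψ(λ) = -log(1-λ) - λ`, for every `y ≥ -1` and
`λ ∈ [0,1)` one has `exp (λ y - ψ(λ) y²) ≤ 1 + λ y`. -/
theorem fan_inequality (y : ℝ) (hy : -1 ≤ y) (l : ℝ) (hl : l ∈ Set.Ico (0:ℝ) 1) :
    Real.exp (l * y - (-Real.log (1 - l) - l) * y^2) ≤ 1 + l * y := by
  obtain ⟨hl0, hl1⟩ := hl
  set g : ℝ → ℝ := fun t => Real.log (1 + t * y) - t * y - y ^ 2 * (Real.log (1 - t) + t)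
    with hg
  -- positivity facts
  have hpos : ∀ t ∈ Set.Icc (0:ℝ) l, (0:ℝ) < 1 - t ∧ (1:ℝ) - t ≤ 1 + t * y := by
    intro t ht
    obtain ⟨ht0, htl⟩ := ht
    constructor
    · linarith
    · nlinarith
  have hderiv : ∀ t ∈ Set.Ioo (0:ℝ) l, HasDerivAt g
      (y / (1 + t * y) - y - y ^ 2 * (-1 / (1 - t) + 1)) t := by
    intro t ht
    obtain ⟨hb, hba⟩ := hpos t ⟨le_of_lt ht.1, le_of_lt ht.2⟩
    have ha : (0:ℝ) < 1 + t * y := lt_of_lt_of_le hb hba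
    have h1 : HasDerivAt (fun t : ℝ => 1 + t * y) y t := by
      simpa using ((hasDerivAt_id t).mul_const y).const_add 1
    have h2 : HasDerivAt (fun t : ℝ => Real.log (1 + t * y)) (y / (1 + t * y)) t :=
      h1.log (ne_of_gt ha)
    have h3 : HasDerivAt (fun t : ℝ => 1 - t) (-1) t := by
      simpa using (hasDerivAt_id t).const_sub 1
    have h4 : HasDerivAt (fun t : ℝ => Real.log (1 - t)) (-1 / (1 - t)) t :=
      h3.log (ne_of_gt hb)
    have h5 : HasDerivAt (fun t : ℝ => t * y) y t := by
      simpa using (hasDerivAt_id t).mul_const y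
    have h6 : HasDerivAt (fun t : ℝ => Real.log (1 - t) + t) (-1 / (1 - t) + 1) t :=
      h4.add (hasDerivAt_id t)
    exact (h2.sub h5).sub (h6.const_mul (y ^ 2))
  have hcont : ContinuousOn g (Set.Icc (0:ℝ) l) := by
    apply ContinuousOn.sub
    apply ContinuousOn.sub
    · apply ContinuousOn.log (by fun_prop)
      intro t ht
      have := hpos t ht
      exact ne_of_gt (lt_of_lt_of_le this.1 this.2)
    · fun_prop
    · apply ContinuousOn.mul continuousOn_const
      apply ContinuousOn.add _ continuousOn_id
      apply ContinuousOn.log (by fun_prop)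
      intro t ht
      exact ne_of_gt (hpos t ht).1
  have hmono : MonotoneOn g (Set.Icc (0:ℝ) l) := by
    apply monotoneOn_of_deriv_nonneg (convex_Icc 0 l) hcont
    · intro t ht
      rw [interior_Icc] at ht
      exact (hderiv t ht).differentiableAt.differentiableWithinAt
    · intro t ht
      rw [interior_Icc] at ht
      rw [(hderiv t ht).deriv]
      obtain ⟨hb, hba⟩ := hpos t ⟨le_of_lt ht.1, le_of_lt ht.2⟩
      have ha : (0:ℝ) < 1 + t * y := lt_of_lt_of_le hb hba
      have key : y / (1 + t * y) - y - y ^ 2 * (-1 / (1 - t) + 1)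
          = t * y ^ 2 * (1 / (1 - t) - 1 / (1 + t * y)) := by
        have hc : (1:ℝ) + y * t ≠ 0 := by rw [mul_comm]; exact ha.ne'
        field_simp [ha.ne', hb.ne', hc]
        ring
      rw [key]
      have h1 : 1 / (1 + t * y) ≤ 1 / (1 - t) := one_div_le_one_div_of_le hb hba
      have h2 : (0:ℝ) ≤ t * y ^ 2 := mul_nonneg ht.1.le (sq_nonneg y)
      nlinarith
  have hkey : g 0 ≤ g l := hmono ⟨le_refl 0, hl0⟩ ⟨hl0, le_refl l⟩ hl0
  have hg0 : g 0 = 0 := by simp [hg]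
  have hal : (0:ℝ) < 1 + l * y := by
    have := hpos l ⟨hl0, le_refl l⟩
    linarith [this.1, this.2]
  have hlog : l * y - (-Real.log (1 - l) - l) * y ^ 2 ≤ Real.log (1 + l * y) := by
    have : g l = Real.log (1 + l * y) - l * y - y ^ 2 * (Real.log (1 - l) + l) := rfl
    nlinarith [hkey, hg0]
  calc Real.exp (l * y - (-Real.log (1 - l) - l) * y ^ 2)
      ≤ Real.exp (Real.log (1 + l * y)) := Real.exp_le_exp.mpr hlog
    _ = 1 + l * y := Real.exp_log hal
end

section
/- De la Peña's supermartingale under conditional symmetry: let (X_t)_{t≥1} be an adapted real-valued process that is conditionally symmetric, meaning that for every t ≥ 1 and every bounded measurable f : ℝ → ℝ, E[f(X_t) | 𝓕_{t−1}] = E[f(−X_t) | 𝓕_{t−1}] a.s. Then for every fixed λ ∈ ℝ, R_t := exp( λ Σ_{i=1}^t X_i − (λ²/2) Σ_{i=1}^t X_i² ), with R_0 := 1, is a test supermartingale with respect to (𝓕_t). -/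
open MeasureTheory Filter
open scoped ENNReal

private lemma delaPena_g_add_neg_le (lam x : ℝ) :
    Real.exp (lam * x - lam ^ 2 / 2 * x ^ 2) + Real.exp (lam * (-x) - lam ^ 2 / 2 * (-x) ^ 2)
      ≤ 2 := by
  have h1 : Real.exp (lam * x - lam ^ 2 / 2 * x ^ 2)
      + Real.exp (lam * (-x) - lam ^ 2 / 2 * (-x) ^ 2)
      = 2 * Real.cosh (lam * x) * Real.exp (-(lam ^ 2 / 2 * x ^ 2)) := by
    rw [Real.cosh_eq]
    rw [show lam * x - lam ^ 2 / 2 * x ^ 2 = lam * x + -(lam ^ 2 / 2 * x ^ 2) by ring,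
      show lam * (-x) - lam ^ 2 / 2 * (-x) ^ 2 = -(lam * x) + -(lam ^ 2 / 2 * x ^ 2) by ring,
      Real.exp_add, Real.exp_add]
    ring
  rw [h1]
  have h2 : Real.cosh (lam * x) ≤ Real.exp ((lam * x) ^ 2 / 2) :=
    Real.cosh_le_exp_half_sq _
  calc 2 * Real.cosh (lam * x) * Real.exp (-(lam ^ 2 / 2 * x ^ 2))
      ≤ 2 * Real.exp ((lam * x) ^ 2 / 2) * Real.exp (-(lam ^ 2 / 2 * x ^ 2)) := by
        have := Real.exp_pos (-(lam ^ 2 / 2 * x ^ 2))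
        nlinarith
    _ = 2 := by
        rw [mul_assoc, ← Real.exp_add, show (lam * x) ^ 2 / 2 + -(lam ^ 2 / 2 * x ^ 2) = 0 by ring,
          Real.exp_zero, mul_one]

/-- **De la Peña's supermartingale under conditional symmetry**: if each `X t`
(for `t ≥ 1`) is conditionally symmetric given `ℱ (t-1)`, then for every fixed
`λ`, `R t = exp (λ ∑_{i=1}^t X i - (λ²/2) ∑_{i=1}^t (X i)²)` is a test
supermartingale. -/
theorem delaPena_conditional_symmetry_supermartingale
    {Ω : Type*} {m0 : MeasurableSpace Ω} {P : Measure Ω} [IsProbabilityMeasure P]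
    {ℱ : Filtration ℕ m0}
    (X : ℕ → Ω → ℝ) (hX : ∀ t, 1 ≤ t → StronglyMeasurable[ℱ t] (X t))
    (hsymm : ∀ t, 1 ≤ t → ∀ f : ℝ → ℝ, Measurable f → (∃ C, ∀ x, |f x| ≤ C) →
      P[fun ω => f (X t ω)|ℱ (t-1)] =ᵐ[P] P[fun ω => f (-(X t ω))|ℱ (t-1)])
    (lam : ℝ) (R : ℕ → Ω → ℝ)
    (hR : ∀ t ω, R t ω = Real.exp (lam * (∑ i ∈ Finset.Icc 1 t, X i ω)
        - lam^2/2 * ∑ i ∈ Finset.Icc 1 t, (X i ω)^2)) :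
    Supermartingale R ℱ P ∧ (∀ t ω, 0 ≤ R t ω) ∧ (∀ ω, R 0 ω = 1) := by
  set g : ℝ → ℝ := fun x => Real.exp (lam * x - lam ^ 2 / 2 * x ^ 2) with hg
  -- basic facts about g
  have hg_meas : Measurable g := by
    apply Real.measurable_exp.comp
    fun_prop
  have hg_pos : ∀ x, 0 < g x := fun x => Real.exp_pos _
  have hg_le : ∀ x, g x ≤ Real.exp (1 / 2) := by
    intro x
    apply Real.exp_le_exp.2
    nlinarith [sq_nonneg (lam * x - 1)]
  have hg_bdd : ∃ C, ∀ x, |g x| ≤ C := by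
    refine ⟨Real.exp (1 / 2), fun x => ?_⟩
    rw [abs_of_pos (hg_pos x)]
    exact hg_le x
  -- nonnegativity and R 0 = 1
  have hR_pos : ∀ t ω, 0 < R t ω := fun t ω => by rw [hR]; exact Real.exp_pos _
  have hR0 : ∀ ω, R 0 ω = 1 := fun ω => by
    simp [hR 0 ω]
  -- R t is bounded
  have hR_le : ∀ t ω, R t ω ≤ Real.exp (t * (1 / 2)) := by
    intro t ω
    rw [hR]
    apply Real.exp_le_exp.2
    rw [Finset.mul_sum, Finset.mul_sum, ← Finset.sum_sub_distrib]
    calc (∑ i ∈ Finset.Icc 1 t, (lam * X i ω - lam ^ 2 / 2 * X i ω ^ 2))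
        ≤ ∑ i ∈ Finset.Icc 1 t, (1 / 2 : ℝ) := by
          apply Finset.sum_le_sum
          intro i _
          nlinarith [sq_nonneg (lam * X i ω - 1)]
      _ ≤ t * (1 / 2) := by
          rw [Finset.sum_const, Nat.card_Icc]
          simp only [nsmul_eq_mul]
          have : ((t + 1 - 1 : ℕ) : ℝ) = (t : ℝ) := by simp
          rw [this]
  -- adaptedness
  have hadp : StronglyAdapted ℱ R := by
    intro t
    have hsum : ∀ (F : ℕ → Ω → ℝ), (∀ i, 1 ≤ i → i ≤ t → StronglyMeasurable[ℱ t] (F i)) →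
        StronglyMeasurable[ℱ t] (fun ω => ∑ i ∈ Finset.Icc 1 t, F i ω) := by
      intro F hF
      apply Finset.stronglyMeasurable_fun_sum
      intro i hi
      rw [Finset.mem_Icc] at hi
      exact hF i hi.1 hi.2
    have h1 : StronglyMeasurable[ℱ t] (fun ω => ∑ i ∈ Finset.Icc 1 t, X i ω) :=
      hsum X fun i h1 h2 => (hX i h1).mono (ℱ.mono h2)
    have h2 : StronglyMeasurable[ℱ t] (fun ω => ∑ i ∈ Finset.Icc 1 t, (X i ω) ^ 2) :=
      hsum (fun i ω => (X i ω) ^ 2) fun i hi1 hi2 => by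
        have hm : Measurable[ℱ t] (X i) := ((hX i hi1).mono (ℱ.mono hi2)).measurable
        exact ((hm.pow_const 2).stronglyMeasurable)
    have hRfun : R t = fun ω => Real.exp (lam * (∑ i ∈ Finset.Icc 1 t, X i ω)
        - lam ^ 2 / 2 * ∑ i ∈ Finset.Icc 1 t, (X i ω) ^ 2) := funext fun ω => hR t ω
    rw [hRfun]
    exact (Real.measurable_exp.comp
      ((h1.measurable.const_mul lam).sub
        (h2.measurable.const_mul (lam ^ 2 / 2)))).stronglyMeasurable
  -- integrability
  have hint : ∀ t, Integrable (R t) P := by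
    intro t
    refine (integrable_const (Real.exp (t * (1 / 2)))).mono'
      ((hadp t).mono (ℱ.le t)).aestronglyMeasurable ?_
    filter_upwards with ω
    rw [Real.norm_eq_abs, abs_of_pos (hR_pos t ω)]
    exact hR_le t ω
  -- the recursion R (t+1) = R t * g (X (t+1))
  have hrec : ∀ t ω, R (t + 1) ω = R t ω * g (X (t + 1) ω) := by
    intro t ω
    rw [hR, hR, hg]
    rw [Finset.sum_Icc_succ_top (Nat.le_add_left 1 t), Finset.sum_Icc_succ_top (Nat.le_add_left 1 t)]
    rw [← Real.exp_add]
    ring_nf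
  -- key: conditional expectation of g (X (t+1)) given ℱ t is ≤ 1
  have hkey : ∀ t, P[fun ω => g (X (t + 1) ω)|ℱ t] ≤ᵐ[P] fun _ => (1 : ℝ) := by
    intro t
    set G : Ω → ℝ := fun ω => g (X (t + 1) ω) with hG
    set G' : Ω → ℝ := fun ω => g (-(X (t + 1) ω)) with hG'
    have hGmeas : AEStronglyMeasurable G P :=
      (hg_meas.comp (((hX (t + 1) (Nat.le_add_left 1 t)).mono (ℱ.le _)).measurable)).aestronglyMeasurable
    have hG'meas : AEStronglyMeasurable G' P :=
      (hg_meas.comp ((((hX (t + 1) (Nat.le_add_left 1 t)).mono (ℱ.le _)).measurable).neg)).aestronglyMeasurable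
    have hGint : Integrable G P := by
      refine (integrable_const (Real.exp (1 / 2))).mono' hGmeas ?_
      filter_upwards with ω
      rw [Real.norm_eq_abs, abs_of_pos (hg_pos _)]
      exact hg_le _
    have hG'int : Integrable G' P := by
      refine (integrable_const (Real.exp (1 / 2))).mono' hG'meas ?_
      filter_upwards with ω
      rw [Real.norm_eq_abs, abs_of_pos (hg_pos _)]
      exact hg_le _
    have hsym : P[G|ℱ t] =ᵐ[P] P[G'|ℱ t] :=
      hsymm (t + 1) (Nat.le_add_left 1 t) g hg_meas hg_bdd
    have hsum_le : (fun ω => G ω + G' ω) ≤ᵐ[P] fun _ => (2 : ℝ) := by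
      filter_upwards with ω
      exact delaPena_g_add_neg_le lam (X (t + 1) ω)
    have h1 : P[fun ω => G ω + G' ω|ℱ t] =ᵐ[P] P[G|ℱ t] + P[G'|ℱ t] :=
      condExp_add hGint hG'int _
    have h2 : P[fun ω => G ω + G' ω|ℱ t] ≤ᵐ[P] P[fun _ => (2 : ℝ)|ℱ t] :=
      condExp_mono (hGint.add hG'int) (integrable_const 2) hsum_le
    have h3 : P[fun _ => (2 : ℝ)|ℱ t] = fun _ => (2 : ℝ) := condExp_const (ℱ.le t) (2 : ℝ)
    rw [h3] at h2
    filter_upwards [hsym, h1, h2] with ω e1 e2 e3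
    have e2' : (P[fun ω => G ω + G' ω|ℱ t]) ω = (P[G|ℱ t]) ω + (P[G'|ℱ t]) ω := by
      rw [e2]; rfl
    have e1' : (P[G|ℱ t]) ω = (P[G'|ℱ t]) ω := e1
    have e3' : (P[fun ω => G ω + G' ω|ℱ t]) ω ≤ 2 := e3
    show (P[G|ℱ t]) ω ≤ 1
    linarith
  -- the supermartingale property
  have hcond : ∀ t, P[R (t + 1)|ℱ t] ≤ᵐ[P] R t := by
    intro t
    have hGint : Integrable (fun ω => g (X (t + 1) ω)) P := by
      refine (integrable_const (Real.exp (1 / 2))).mono'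
        (hg_meas.comp (((hX (t + 1) (Nat.le_add_left 1 t)).mono
          (ℱ.le _)).measurable)).aestronglyMeasurable ?_
      filter_upwards with ω
      rw [Real.norm_eq_abs, abs_of_pos (hg_pos _)]
      exact hg_le _
    have hpull : P[R t * fun ω => g (X (t + 1) ω)|ℱ t]
        =ᵐ[P] R t * P[fun ω => g (X (t + 1) ω)|ℱ t] :=
      condExp_stronglyMeasurable_mul_of_bound (ℱ.le t) (hadp t) hGint (Real.exp (t * (1 / 2)))
        (by
          filter_upwards with ω
          rw [Real.norm_eq_abs, abs_of_pos (hR_pos t ω)]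
          exact hR_le t ω)
    have heq : R (t + 1) = R t * fun ω => g (X (t + 1) ω) := by
      funext ω
      exact hrec t ω
    rw [heq]
    filter_upwards [hpull, hkey t] with ω e1 e2
    rw [e1]
    simp only [Pi.mul_apply]
    calc R t ω * (P[fun ω => g (X (t + 1) ω)|ℱ t]) ω ≤ R t ω * 1 :=
        mul_le_mul_of_nonneg_left e2 (hR_pos t ω).le
      _ = R t ω := mul_one _
  exact ⟨supermartingale_nat hadp hint hcond, fun t ω => (hR_pos t ω).le, hR0⟩
end

section
/- Odd predictable bets give test martingales under conditional symmetry: for each t ≥ 1 let f_t : Ω × ℝ → ℝ be 𝓕_{t−1} ⊗ Borel-measurable, bounded, with f_t(ω, −x) = −f_t(ω, x) for all ω, x (odd in x) and 1 + f_t(ω, x) ≥ 0 for all ω, x. Let (X_t)_{t≥1} be an adapted real-valued process that is conditionally symmetric, meaning that for every t ≥ 1 and every bounded measurable g : ℝ → ℝ, E[g(X_t) | 𝓕_{t−1}] = E[g(−X_t) | 𝓕_{t−1}] a.s. Then M_t := Π_{i=1}^t (1 + f_i(·, X_i)), with M_0 := 1, is a test martingale with respect to (𝓕_t). -/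
open MeasureTheory Filter
open scoped ENNReal

private lemma prod_mono_left {Ω : Type*} {m m' : MeasurableSpace Ω}
    {mb : MeasurableSpace ℝ} (h : m ≤ m') :
    MeasurableSpace.prod m mb ≤ MeasurableSpace.prod m' mb :=
  sup_le_sup (MeasurableSpace.comap_mono h) le_rfl

private lemma map_pair_integral_eq
    {α Ω : Type*} [mα : MeasurableSpace α] {m0 : MeasurableSpace Ω}
    {P : Measure Ω} [IsProbabilityMeasure P] {π : Ω → α} (hπ : Measurable π)
    {X Y : Ω → ℝ} (hXm : Measurable X) (hYm : Measurable Y)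
    (h : ∀ A : Set α, MeasurableSet A → ∀ B : Set ℝ, MeasurableSet B →
      P (π ⁻¹' A ∩ X ⁻¹' B) = P (π ⁻¹' A ∩ Y ⁻¹' B))
    (F : α × ℝ → ℝ) (hF : Measurable F) :
    ∫ ω, F (π ω, X ω) ∂P = ∫ ω, F (π ω, Y ω) ∂P := by
  have hmX : Measurable fun ω => (π ω, X ω) := hπ.prodMk hXm
  have hmY : Measurable fun ω => (π ω, Y ω) := hπ.prodMk hYm
  have hmap : Measure.map (fun ω => (π ω, X ω)) P = Measure.map (fun ω => (π ω, Y ω)) P := by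
    refine ext_of_generate_finite _ generateFrom_prod.symm isPiSystem_prod ?_ ?_
    · rintro S ⟨A, hA, B, hB, rfl⟩
      rw [Measure.map_apply hmX ((hA.prod hB)), Measure.map_apply hmY ((hA.prod hB)),
        Set.mk_preimage_prod, Set.mk_preimage_prod]
      exact h A hA B hB
    · rw [Measure.map_apply hmX MeasurableSet.univ, Measure.map_apply hmY MeasurableSet.univ]
      simp
  calc ∫ ω, F (π ω, X ω) ∂P
      = ∫ p, F p ∂(Measure.map (fun ω => (π ω, X ω)) P) :=
        (integral_map hmX.aemeasurable hF.aestronglyMeasurable).symm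
    _ = ∫ p, F p ∂(Measure.map (fun ω => (π ω, Y ω)) P) := by rw [hmap]
    _ = ∫ ω, F (π ω, Y ω) ∂P := integral_map hmY.aemeasurable hF.aestronglyMeasurable

private lemma condexp_zero_of_odd
    {Ω : Type*} {𝔾 m0 : MeasurableSpace Ω} {P : @MeasureTheory.Measure Ω m0}
    [IsProbabilityMeasure P] (h𝔾 : 𝔾 ≤ m0)
    {X : Ω → ℝ} (hXm : Measurable[m0] X)
    (hsym : ∀ g : ℝ → ℝ, Measurable g → (∃ C, ∀ x, |g x| ≤ C) →
      P[fun ω => g (X ω)|𝔾] =ᵐ[P] P[fun ω => g (-(X ω))|𝔾])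
    (F : Ω → ℝ → ℝ)
    (hFm : Measurable[MeasurableSpace.prod 𝔾 inferInstance] (Function.uncurry F))
    (hFb : ∃ C, ∀ ω x, |F ω x| ≤ C)
    (hFodd : ∀ ω x, F ω (-x) = -(F ω x)) :
    P[fun ω => F ω (X ω)|𝔾] =ᵐ[P] 0 := by
  haveI : SigmaFinite (P.trim h𝔾) := inferInstance
  set Y : Ω → ℝ := fun ω => -(X ω) with hYdef
  have hYm : Measurable[m0] Y := hXm.neg
  -- rectangle identity
  have hrect : ∀ A : Set Ω, MeasurableSet[𝔾] A → ∀ B : Set ℝ, MeasurableSet B →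
      P (id ⁻¹' A ∩ X ⁻¹' B) = P (id ⁻¹' A ∩ Y ⁻¹' B) := by
    intro A hA B hB
    set g : ℝ → ℝ := B.indicator (fun _ => (1:ℝ)) with hgdef
    have hgm : Measurable g := (measurable_const).indicator hB
    have hgb : ∀ x, |g x| ≤ 1 := by
      intro x; by_cases hx : x ∈ B <;> simp [g, hx]
    have hintX : Integrable (fun ω => g (X ω)) P :=
      Integrable.mono' (integrable_const 1)
        (hgm.comp hXm).aestronglyMeasurable
        (Filter.Eventually.of_forall fun ω => by simpa [Real.norm_eq_abs] using hgb (X ω))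
    have hintY : Integrable (fun ω => g (Y ω)) P :=
      Integrable.mono' (integrable_const 1)
        (hgm.comp hYm).aestronglyMeasurable
        (Filter.Eventually.of_forall fun ω => by simpa [Real.norm_eq_abs] using hgb (Y ω))
    have hseq : ∫ ω in A, g (X ω) ∂P = ∫ ω in A, g (Y ω) ∂P := by
      rw [← setIntegral_condExp h𝔾 hintX hA, ← setIntegral_condExp h𝔾 hintY hA]
      refine setIntegral_congr_ae (h𝔾 A hA) ?_
      filter_upwards [hsym g hgm ⟨1, hgb⟩] with ω hω _ using hω
    have hX' : ∀ ω, g (X ω) = (X ⁻¹' B).indicator (fun _ => (1:ℝ)) ω := by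
      intro ω; by_cases hx : X ω ∈ B <;> simp [g, hx]
    have hY' : ∀ ω, g (Y ω) = (Y ⁻¹' B).indicator (fun _ => (1:ℝ)) ω := by
      intro ω; by_cases hx : Y ω ∈ B <;> simp [g, hx]
    simp only [hX', hY'] at hseq
    rw [setIntegral_indicator (hXm hB), setIntegral_indicator (hYm hB),
      setIntegral_const, setIntegral_const] at hseq
    simp only [smul_eq_mul, mul_one] at hseq
    have := (ENNReal.toReal_eq_toReal_iff' (measure_ne_top P _) (measure_ne_top P _)).mp hseq
    simpa using this
  -- transfer: for any product-measurable bounded G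
  have htrans : ∀ G : Ω → ℝ → ℝ,
      Measurable[MeasurableSpace.prod 𝔾 inferInstance] (Function.uncurry G) →
      ∫ ω, G ω (X ω) ∂P = ∫ ω, G ω (Y ω) ∂P := by
    intro G hGm
    exact @map_pair_integral_eq Ω Ω 𝔾 m0 P _ id (measurable_id'' h𝔾) X Y hXm hYm hrect
      (Function.uncurry G) hGm
  set YF : Ω → ℝ := fun ω => F ω (X ω) with hYFdef
  have hpair : @Measurable Ω (Ω × ℝ) m0 (MeasurableSpace.prod 𝔾 inferInstance)
      (fun ω => ((ω, X ω) : Ω × ℝ)) :=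
    Measurable.prodMk (measurable_id'' h𝔾) hXm
  have hYFm : Measurable[m0] YF := hFm.comp hpair
  obtain ⟨C, hC⟩ := hFb
  have hYFint : Integrable YF P :=
    Integrable.mono' (integrable_const C) hYFm.aestronglyMeasurable
      (Filter.Eventually.of_forall fun ω => by simpa [Real.norm_eq_abs] using hC ω (X ω))
  have h0 : ∀ s : Set Ω, MeasurableSet[𝔾] s → ∫ ω in s, YF ω ∂P = 0 := by
    intro s hs
    set G : Ω → ℝ → ℝ := fun ω x => s.indicator (fun _ => (1:ℝ)) ω * F ω x with hGdef
    have hGm : Measurable[MeasurableSpace.prod 𝔾 inferInstance] (Function.uncurry G) := by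
      have h1 : Measurable[MeasurableSpace.prod 𝔾 inferInstance]
          (fun p : Ω × ℝ => s.indicator (fun _ => (1:ℝ)) p.1) :=
        ((measurable_const).indicator hs).comp measurable_fst
      exact h1.mul hFm
    have := htrans G hGm
    have hneg : ∫ ω, G ω (Y ω) ∂P = - ∫ ω, G ω (X ω) ∂P := by
      have : ∀ ω, G ω (Y ω) = -(G ω (X ω)) := by
        intro ω; simp only [G, hYdef, hFodd]; ring
      simp only [this]
      exact integral_neg _
    have hzero : ∫ ω, G ω (X ω) ∂P = 0 := by linarith [this, hneg]
    have hind : (fun ω => G ω (X ω)) = s.indicator YF := by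
      funext ω; by_cases hω : ω ∈ s <;> simp [G, YF, hω]
    rw [hind, integral_indicator (h𝔾 s hs)] at hzero
    exact hzero
  have := ae_eq_condExp_of_forall_setIntegral_eq h𝔾 hYFint
    (fun s _ _ => integrableOn_zero)
    (fun s hs _ => by rw [h0 s hs]; simp)
    (StronglyMeasurable.aestronglyMeasurable (@stronglyMeasurable_const Ω ℝ 𝔾 _ 0))
  exact this.symm

/-- **Odd predictable bets give test martingales under conditional symmetry**: if
each `f t : Ω × ℝ → ℝ` is `ℱ (t-1) ⊗ Borel`-measurable, bounded, odd in its real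
argument and satisfies `1 + f t ω x ≥ 0`, and each `X t` is conditionally
symmetric given `ℱ (t-1)`, then `M t = ∏_{i=1}^t (1 + f i (ω, X i ω))` is a test
martingale. -/
theorem odd_predictable_bets_test_martingale
    {Ω : Type*} {m0 : MeasurableSpace Ω} {P : Measure Ω} [IsProbabilityMeasure P]
    {ℱ : Filtration ℕ m0}
    (f : ℕ → Ω → ℝ → ℝ)
    (hfm : ∀ t, 1 ≤ t →
      Measurable[MeasurableSpace.prod (ℱ (t-1)) inferInstance] (Function.uncurry (f t)))
    (hfb : ∀ t, 1 ≤ t → ∃ C, ∀ ω x, |f t ω x| ≤ C)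
    (hodd : ∀ t, 1 ≤ t → ∀ ω x, f t ω (-x) = -(f t ω x))
    (hnn : ∀ t, 1 ≤ t → ∀ ω x, 0 ≤ 1 + f t ω x)
    (X : ℕ → Ω → ℝ) (hX : ∀ t, 1 ≤ t → StronglyMeasurable[ℱ t] (X t))
    (hsymm : ∀ t, 1 ≤ t → ∀ g : ℝ → ℝ, Measurable g → (∃ C, ∀ x, |g x| ≤ C) →
      P[fun ω => g (X t ω)|ℱ (t-1)] =ᵐ[P] P[fun ω => g (-(X t ω))|ℱ (t-1)])
    (M : ℕ → Ω → ℝ)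
    (hM : ∀ t ω, M t ω = ∏ i ∈ Finset.Icc 1 t, (1 + f i ω (X i ω))) :
    Martingale M ℱ P ∧ (∀ t ω, 0 ≤ M t ω) ∧ (∀ ω, M 0 ω = 1) := by
  -- measurability of X i w.r.t. m0 and ℱ t
  have hXm : ∀ i, 1 ≤ i → Measurable[m0] (X i) :=
    fun i hi => ((hX i hi).measurable).mono (ℱ.le i) le_rfl
  -- strong measurability of the bet terms w.r.t. ℱ t for i ≤ t
  have hterm : ∀ i t, 1 ≤ i → i ≤ t →
      Measurable[ℱ t] (fun ω => f i ω (X i ω)) := by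
    intro i t hi hit
    have hu : @Measurable (Ω × ℝ) ℝ (MeasurableSpace.prod (ℱ t) inferInstance) _
        (Function.uncurry (f i)) :=
      (hfm i hi).mono (prod_mono_left (ℱ.mono (le_trans (Nat.sub_le i 1) hit))) le_rfl
    have hpair : @Measurable Ω (Ω × ℝ) (ℱ t) (MeasurableSpace.prod (ℱ t) inferInstance)
        (fun ω => ((ω, X i ω) : Ω × ℝ)) :=
      Measurable.prodMk measurable_id
        (((hX i hi).measurable).mono (ℱ.mono hit) le_rfl)
    exact hu.comp hpair
  have hadp : StronglyAdapted ℱ M := by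
    intro t
    have : M t = fun ω => ∏ i ∈ Finset.Icc 1 t, (1 + f i ω (X i ω)) := funext (hM t)
    rw [this]
    refine Measurable.stronglyMeasurable ?_
    refine Finset.measurable_prod _ fun i hi => ?_
    have hi1 : 1 ≤ i := (Finset.mem_Icc.mp hi).1
    have hit : i ≤ t := (Finset.mem_Icc.mp hi).2
    exact measurable_const.add (hterm i t hi1 hit)
  have hstep : ∀ t ω, M (t+1) ω = M t ω * (1 + f (t+1) ω (X (t+1) ω)) := by
    intro t ω
    rw [hM, hM, Finset.prod_Icc_succ_top (Nat.le_add_left 1 t)]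
  -- uniform bound on M t
  have hbdd : ∀ t, ∃ D, 0 ≤ D ∧ ∀ ω, |M t ω| ≤ D := by
    intro t
    induction t with
    | zero => exact ⟨1, zero_le_one, fun ω => by rw [hM]; simp⟩
    | succ t ih =>
      obtain ⟨D, hD0, hD⟩ := ih
      obtain ⟨C, hC⟩ := hfb (t+1) (Nat.le_add_left 1 t)
      refine ⟨D * (1 + max C 0), by positivity, fun ω => ?_⟩
      rw [hstep t ω, abs_mul]
      refine mul_le_mul (hD ω) ?_ (abs_nonneg _) hD0
      calc |1 + f (t+1) ω (X (t+1) ω)| ≤ |(1:ℝ)| + |f (t+1) ω (X (t+1) ω)| := abs_add_le _ _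
        _ ≤ 1 + max C 0 := by
            rw [abs_one]
            exact add_le_add_right (le_trans (hC ω (X (t+1) ω)) (le_max_left _ _)) 1
  have hint : ∀ t, Integrable (M t) P := by
    intro t
    obtain ⟨D, _, hD⟩ := hbdd t
    exact Integrable.mono' (integrable_const D)
      ((hadp t).mono (ℱ.le t)).aestronglyMeasurable
      (Filter.Eventually.of_forall fun ω => by simpa [Real.norm_eq_abs] using hD ω)
  -- the martingale property
  have hmart : ∀ t, M t =ᵐ[P] P[M (t+1)|ℱ t] := by
    intro t
    have h1t : (1:ℕ) ≤ t + 1 := Nat.le_add_left 1 t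
    have hXm' : Measurable[m0] (X (t+1)) := hXm (t+1) h1t
    -- conditional expectation of the bet term is zero
    have key : P[(fun ω => f (t+1) ω (X (t+1) ω))|ℱ t] =ᵐ[P] 0 := by
      refine condexp_zero_of_odd (𝔾 := ℱ t) (ℱ.le t) hXm' ?_ (f (t+1)) ?_
        (hfb (t+1) h1t) (hodd (t+1) h1t)
      · intro g hg hgb
        simpa using hsymm (t+1) h1t g hg hgb
      · simpa using hfm (t+1) h1t
    set Y : Ω → ℝ := fun ω => f (t+1) ω (X (t+1) ω) with hYdef
    have hYm : Measurable[m0] Y := (hterm (t+1) (t+1) h1t le_rfl).mono (ℱ.le (t+1)) le_rfl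
    obtain ⟨C, hC⟩ := hfb (t+1) h1t
    have hYint : Integrable Y P :=
      Integrable.mono' (integrable_const C) hYm.aestronglyMeasurable
        (Filter.Eventually.of_forall fun ω => by
          simpa [Real.norm_eq_abs] using hC ω (X (t+1) ω))
    have hgint : Integrable (fun ω => 1 + Y ω) P := (integrable_const 1).add hYint
    have hMrw : M (t+1) = M t * fun ω => 1 + Y ω := by
      funext ω; exact hstep t ω
    have hmul : P[M t * (fun ω => 1 + Y ω)|ℱ t] =ᵐ[P] M t * P[(fun ω => 1 + Y ω)|ℱ t] := by
      refine condExp_mul_of_stronglyMeasurable_left (hadp t) ?_ hgint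
      rw [← hMrw]; exact hint (t+1)
    have hadd : P[(fun ω => 1 + Y ω)|ℱ t]
        =ᵐ[P] P[(fun _ => (1:ℝ))|ℱ t] + P[Y|ℱ t] := condExp_add (integrable_const 1) hYint _
    have hone : P[(fun _ => (1:ℝ))|ℱ t] = fun _ => (1:ℝ) := condExp_const (ℱ.le t) 1
    rw [hMrw]
    filter_upwards [hmul, hadd, key] with ω h1 h2 h3
    have : (P[(fun ω => 1 + Y ω)|ℱ t]) ω = 1 := by
      rw [h2, Pi.add_apply, hone]
      simp [h3]
    rw [h1, Pi.mul_apply, this, mul_one]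
  refine ⟨martingale_nat hadp hint hmart, ?_, ?_⟩
  · intro t ω
    rw [hM]
    exact Finset.prod_nonneg fun i hi => hnn i (Finset.mem_Icc.mp hi).1 ω (X i ω)
  · intro ω; rw [hM]; simp
end

section
/- FDR control of the e-BH procedure under arbitrary dependence (Wang–Ramdas): let e_1, …, e_K be nonnegative random variables on a probability space (with arbitrary joint dependence), let N ⊆ {1,…,K} be the (deterministic) set of indices with E[e_i] ≤ 1 for all i ∈ N, and let α ∈ (0,1). Define k* := max{ k ∈ {1,…,K} : #{ i : e_i ≥ K/(kα) } ≥ k } (setting k* := 0 and R := ∅ if no such k exists), and let R := { i : e_i ≥ K/(k*α) } be the rejection set. Then E[ |R ∩ N| / max(|R|, 1) ] ≤ α·|N|/K ≤ α. -/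
open MeasureTheory
open scoped ENNReal

/-- **FDR control of the e-BH procedure under arbitrary dependence** (Wang–Ramdas):
with e-values `e i` that have expectation at most one for indices in the null set
`N`, the e-BH rejection set `R` (built from `k* = max {k : #{i : e i ≥ K/(kα)} ≥ k}`)
has false discovery rate at most `α |N| / K ≤ α`. -/
theorem eBH_FDR_control
    {Ω : Type*} [MeasurableSpace Ω] (P : Measure Ω) [IsProbabilityMeasure P]
    (K : ℕ) (hK : 1 ≤ K)
    (e : Fin K → Ω → ℝ) (hmeas : ∀ i, Measurable (e i)) (henn : ∀ i ω, 0 ≤ e i ω)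
    (N : Finset (Fin K))
    (hN : ∀ i ∈ N, ∫⁻ ω, ENNReal.ofReal (e i ω) ∂P ≤ 1)
    {α : ℝ} (hα : α ∈ Set.Ioo (0:ℝ) 1)
    (kstar : Ω → ℕ)
    (hkstar : ∀ ω, kstar ω = ((Finset.Icc 1 K).filter
        (fun k : ℕ => k ≤ (Finset.univ.filter
          (fun i : Fin K => (K : ℝ) / ((k : ℝ) * α) ≤ e i ω)).card)).sup id)
    (R : Ω → Finset (Fin K))
    (hR : ∀ ω, R ω = if kstar ω = 0 then (∅ : Finset (Fin K))
        else Finset.univ.filter (fun i : Fin K => (K : ℝ) / ((kstar ω : ℝ) * α) ≤ e i ω)) :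
    (∫ ω, ((R ω ∩ N).card : ℝ) / max ((R ω).card : ℝ) 1 ∂P ≤ α * N.card / K)
      ∧ α * (N.card : ℝ) / K ≤ α := by
  obtain ⟨hα0, hα1⟩ := hα
  have hK0 : (0:ℝ) < K := by exact_mod_cast hK
  -- pointwise bound
  have hpt : ∀ ω, ((R ω ∩ N).card : ℝ) / max ((R ω).card : ℝ) 1
      ≤ ∑ i ∈ N, α * e i ω / K := by
    intro ω
    have hRHSnn : 0 ≤ ∑ i ∈ N, α * e i ω / K :=
      Finset.sum_nonneg fun i _ =>
        div_nonneg (mul_nonneg hα0.le (henn i ω)) hK0.le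
    by_cases hk : kstar ω = 0
    · rw [hR ω, if_pos hk]
      simpa using hRHSnn
    · set k := kstar ω with hkdef
      have hRω : R ω
          = Finset.univ.filter (fun i : Fin K => (K:ℝ)/((k:ℝ)*α) ≤ e i ω) := by
        rw [hR ω, if_neg hk]
      set s := ((Finset.Icc 1 K).filter
        (fun k : ℕ => k ≤ (Finset.univ.filter
          (fun i : Fin K => (K : ℝ) / ((k : ℝ) * α) ≤ e i ω)).card)) with hs
      have hks : k = s.sup id := hkstar ω
      have hsne : s.Nonempty := by
        rw [Finset.nonempty_iff_ne_empty]
        intro h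
        rw [h] at hks
        simp at hks
        exact hk hks
      have hkmem : k ∈ s := by
        obtain ⟨b, hb, hbeq⟩ := Finset.exists_mem_eq_sup s hsne id
        rw [hks, hbeq]
        exact hb
      rw [hs, Finset.mem_filter, Finset.mem_Icc] at hkmem
      obtain ⟨⟨hk1, hkK⟩, hkcard⟩ := hkmem
      rw [← hRω] at hkcard
      have hcard1 : 1 ≤ (R ω).card := le_trans hk1 hkcard
      have hmax : max ((R ω).card : ℝ) 1 = ((R ω).card : ℝ) :=
        max_eq_left (by exact_mod_cast hcard1)
      rw [hmax]
      have hkpos : (0:ℝ) < k := by exact_mod_cast hk1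
      have hRpos : (0:ℝ) < ((R ω).card : ℝ) := by exact_mod_cast hcard1
      calc ((R ω ∩ N).card : ℝ) / ((R ω).card : ℝ)
          = ∑ _i ∈ R ω ∩ N, (1:ℝ) / ((R ω).card : ℝ) := by
            rw [Finset.sum_const, nsmul_eq_mul]; ring
        _ ≤ ∑ i ∈ R ω ∩ N, α * e i ω / K := by
            refine Finset.sum_le_sum fun i hi => ?_
            have hiR : i ∈ R ω := Finset.mem_inter.mp hi |>.1
            rw [hRω, Finset.mem_filter] at hiR
            have hei : (K:ℝ)/((k:ℝ)*α) ≤ e i ω := hiR.2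
            have h1 : (1:ℝ)/((R ω).card : ℝ) ≤ 1/(k:ℝ) := by
              apply one_div_le_one_div_of_le hkpos
              exact_mod_cast hkcard
            have h2 : (1:ℝ)/(k:ℝ) ≤ α * e i ω / K := by
              have key : (K:ℝ)/((k:ℝ)*α) * (α/K) = 1/(k:ℝ) := by
                field_simp
              calc (1:ℝ)/(k:ℝ) = (K:ℝ)/((k:ℝ)*α) * (α/K) := key.symm
                _ ≤ e i ω * (α/K) :=
                    mul_le_mul_of_nonneg_right hei (by positivity)
                _ = α * e i ω / K := by ring
            exact h1.trans h2
        _ ≤ ∑ i ∈ N, α * e i ω / K := by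
            refine Finset.sum_le_sum_of_subset_of_nonneg
              (Finset.inter_subset_right) fun i _ _ =>
              div_nonneg (mul_nonneg hα0.le (henn i ω)) hK0.le
  -- integrability
  have hint : ∀ i ∈ N, Integrable (e i) P := by
    intro i hi
    refine ⟨(hmeas i).aestronglyMeasurable, ?_⟩
    rw [hasFiniteIntegral_iff_ofReal (Filter.Eventually.of_forall (henn i))]
    exact lt_of_le_of_lt (hN i hi) ENNReal.one_lt_top
  have hIle : ∀ i ∈ N, ∫ ω, e i ω ∂P ≤ 1 := by
    intro i hi
    rw [integral_eq_lintegral_of_nonneg_ae (Filter.Eventually.of_forall (henn i))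
      (hmeas i).aestronglyMeasurable]
    calc (∫⁻ ω, ENNReal.ofReal (e i ω) ∂P).toReal
        ≤ (1 : ℝ≥0∞).toReal := ENNReal.toReal_mono ENNReal.one_ne_top (hN i hi)
      _ = 1 := by simp
  have hintg : ∀ i ∈ N, Integrable (fun ω => α * e i ω / K) P := by
    intro i hi
    simpa [mul_div_assoc] using ((hint i hi).div_const (K:ℝ)).const_mul α
  have h1 : ∫ ω, ((R ω ∩ N).card : ℝ) / max ((R ω).card : ℝ) 1 ∂P
      ≤ ∫ ω, ∑ i ∈ N, α * e i ω / K ∂P := by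
    refine integral_mono_of_nonneg (Filter.Eventually.of_forall fun ω => ?_)
      (integrable_finset_sum N hintg) (Filter.Eventually.of_forall hpt)
    exact div_nonneg (Nat.cast_nonneg _) (le_trans zero_le_one (le_max_right _ 1))
  have h2 : ∫ ω, ∑ i ∈ N, α * e i ω / K ∂P ≤ α * N.card / K := by
    rw [integral_finset_sum N hintg]
    calc ∑ i ∈ N, ∫ ω, α * e i ω / K ∂P
        = ∑ i ∈ N, α * (∫ ω, e i ω ∂P) / K := by
          refine Finset.sum_congr rfl fun i hi => ?_
          rw [show (fun ω => α * e i ω / K) = fun ω => (α / K) * e i ω by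
            funext ω; ring]
          rw [show (fun ω => α / ↑K * e i ω) = fun ω => (α / K) • e i ω from rfl,
            integral_smul]
          simp [smul_eq_mul]; ring
      _ ≤ ∑ _i ∈ N, α * 1 / K := by
          refine Finset.sum_le_sum fun i hi => ?_
          have := hIle i hi
          gcongr
      _ = α * N.card / K := by
          rw [Finset.sum_const, nsmul_eq_mul]; ring
  have hNK : (N.card : ℝ) ≤ K := by
    have := N.card_le_univ
    simp only [Finset.card_univ, Fintype.card_fin] at this
    exact_mod_cast this
  constructor
  · exact h1.trans h2
  · rw [div_le_iff₀ hK0]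
    calc α * (N.card : ℝ) ≤ α * K := by
          exact mul_le_mul_of_nonneg_left hNK hα0.le
      _ = α * K := rfl
end

section
/- FCR control of the e-BY procedure for arbitrary selection rules (Xu et al.): let e_1, …, e_K be nonnegative random variables with E[e_i] ≤ 1 for every i in a deterministic set N ⊆ {1,…,K}, let α ∈ (0,1), and let S be an arbitrary random subset of {1,…,K} (measurable, possibly depending on all the data in any way). Then E[ #{ i ∈ S ∩ N : e_i ≥ K/(α·|S|) } / max(|S|, 1) ] ≤ α·|N|/K ≤ α. -/
open MeasureTheory
open scoped ENNReal

/-- **FCR control of the e-BY procedure for arbitrary selection rules** (Xu et al.):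
with e-values `e i` having expectation at most one for indices in the null set `N`,
and an arbitrary (measurable) random selection `S ⊆ {1,…,K}`, the expected
proportion of selected null indices with `e i ≥ K/(α |S|)` among the selected
indices is at most `α |N| / K ≤ α`. -/
theorem eBY_FCR_control
    {Ω : Type*} [MeasurableSpace Ω] (P : Measure Ω) [IsProbabilityMeasure P]
    (K : ℕ) (hK : 1 ≤ K)
    (e : Fin K → Ω → ℝ) (hmeas : ∀ i, Measurable (e i)) (henn : ∀ i ω, 0 ≤ e i ω)
    (N : Finset (Fin K))
    (hN : ∀ i ∈ N, ∫⁻ ω, ENNReal.ofReal (e i ω) ∂P ≤ 1)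
    {α : ℝ} (hα : α ∈ Set.Ioo (0:ℝ) 1)
    (S : Ω → Finset (Fin K))
    (hS : ∀ s : Finset (Fin K), MeasurableSet {ω | S ω = s}) :
    (∫ ω, ((((S ω) ∩ N).filter
          (fun i => (K : ℝ) / (α * ((S ω).card : ℝ)) ≤ e i ω)).card : ℝ)
        / max ((S ω).card : ℝ) 1 ∂P ≤ α * N.card / K)
      ∧ α * (N.card : ℝ) / K ≤ α := by
  obtain ⟨hα0, hα1⟩ := hα
  have hKpos : (0:ℝ) < K := by exact_mod_cast hK
  set f : Ω → ℝ := fun ω => ((((S ω) ∩ N).filter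
          (fun i => (K : ℝ) / (α * ((S ω).card : ℝ)) ≤ e i ω)).card : ℝ)
        / max ((S ω).card : ℝ) 1 with hfdef
  set g : Ω → ℝ := fun ω => (α / K) * ∑ i ∈ N, e i ω with hgdef
  -- integrability of e i for i ∈ N
  have hint : ∀ i ∈ N, Integrable (e i) P := by
    intro i hi
    refine ⟨(hmeas i).aestronglyMeasurable, ?_⟩
    rw [hasFiniteIntegral_iff_norm]
    have : ∫⁻ ω, ENNReal.ofReal ‖e i ω‖ ∂P = ∫⁻ ω, ENNReal.ofReal (e i ω) ∂P := by
      refine lintegral_congr fun ω => ?_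
      rw [Real.norm_eq_abs, abs_of_nonneg (henn i ω)]
    rw [this]
    exact lt_of_le_of_lt (hN i hi) ENNReal.one_lt_top
  have hEe : ∀ i ∈ N, ∫ ω, e i ω ∂P ≤ 1 := by
    intro i hi
    rw [integral_eq_lintegral_of_nonneg_ae (ae_of_all _ (henn i))
      (hmeas i).aestronglyMeasurable]
    calc (∫⁻ ω, ENNReal.ofReal (e i ω) ∂P).toReal
        ≤ (1 : ℝ≥0∞).toReal := ENNReal.toReal_mono ENNReal.one_ne_top (hN i hi)
      _ = 1 := by simp
  have hgint : Integrable g P :=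
    (integrable_finset_sum N hint).const_mul _
  have hf0 : ∀ ω, 0 ≤ f ω := fun ω =>
    div_nonneg (Nat.cast_nonneg _) (le_trans zero_le_one (le_max_right _ _))
  have hle : ∀ ω, f ω ≤ g ω := by
    intro ω
    by_cases hs : (S ω).card = 0
    · have hempty : S ω = ∅ := Finset.card_eq_zero.mp hs
      have : f ω = 0 := by simp [hfdef, hempty]
      rw [this]
      exact mul_nonneg (div_nonneg hα0.le hKpos.le)
        (Finset.sum_nonneg fun i _ => henn i ω)
    · have hc1 : (1:ℝ) ≤ ((S ω).card : ℝ) := by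
        exact_mod_cast Nat.one_le_iff_ne_zero.mpr hs
      have hcpos : (0:ℝ) < ((S ω).card : ℝ) := lt_of_lt_of_le one_pos hc1
      have hmax : max ((S ω).card : ℝ) 1 = ((S ω).card : ℝ) := max_eq_left hc1
      set c : ℝ := ((S ω).card : ℝ) with hcdef
      set T := ((S ω) ∩ N).filter
          (fun i => (K : ℝ) / (α * c) ≤ e i ω) with hTdef
      have hTN : T ⊆ N := fun i hi =>
        (Finset.mem_inter.mp (Finset.mem_filter.mp hi).1).2
      have key : (T.card : ℝ) ≤ g ω * c := by
        calc (T.card : ℝ) = ∑ i ∈ T, (1:ℝ) := by simp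
          _ ≤ ∑ i ∈ T, (α * c / K) * e i ω := by
              refine Finset.sum_le_sum fun i hi => ?_
              have hei : (K : ℝ) / (α * c) ≤ e i ω :=
                (Finset.mem_filter.mp hi).2
              have hacpos : (0:ℝ) < α * c := mul_pos hα0 hcpos
              have h1 : (α * c / K) * ((K : ℝ) / (α * c)) = 1 := by
                field_simp
              calc (1:ℝ) = (α * c / K) * ((K : ℝ) / (α * c)) := h1.symm
                _ ≤ (α * c / K) * e i ω := by
                    exact mul_le_mul_of_nonneg_left hei
                      (div_nonneg hacpos.le hKpos.le)
          _ ≤ ∑ i ∈ N, (α * c / K) * e i ω := by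
              refine Finset.sum_le_sum_of_subset_of_nonneg hTN fun i _ _ => ?_
              exact mul_nonneg (div_nonneg (mul_pos hα0 hcpos).le hKpos.le)
                (henn i ω)
          _ = g ω * c := by
              have hg : g ω = α / K * ∑ i ∈ N, e i ω := rfl
              rw [hg, Finset.mul_sum, Finset.sum_mul]
              exact Finset.sum_congr rfl fun i _ => by ring
      have : f ω = (T.card : ℝ) / c := by
        rw [hfdef]; show (T.card : ℝ) / max c 1 = (T.card : ℝ) / c; rw [hmax]
      rw [this, div_le_iff₀ hcpos]
      exact key
  -- measurability of f
  have hfmeas : Measurable f := by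
    have heq : f = fun ω => ∑ s : Finset (Fin K), if S ω = s then
        (∑ i ∈ s ∩ N, if (K:ℝ) / (α * (s.card : ℝ)) ≤ e i ω then (1:ℝ) else 0)
          / max ((s.card : ℝ)) 1 else 0 := by
      funext ω
      rw [Finset.sum_eq_single (S ω)]
      · simp only [if_pos rfl, hfdef]
        congr 1
        rw [Finset.card_filter]
        push_cast
        rfl
      · intro b _ hb
        rw [if_neg (fun h => hb h.symm)]
      · intro h; exact absurd (Finset.mem_univ _) h
    rw [heq]
    refine Finset.measurable_sum _ fun s _ => ?_
    refine Measurable.ite (hS s) ?_ measurable_const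
    refine Measurable.div_const ?_ _
    refine Finset.measurable_sum _ fun i _ => ?_
    exact Measurable.ite (measurableSet_le measurable_const (hmeas i))
      measurable_const measurable_const
  have hfint : Integrable f P := by
    refine hgint.mono' hfmeas.aestronglyMeasurable (ae_of_all _ fun ω => ?_)
    rw [Real.norm_eq_abs, abs_of_nonneg (hf0 ω)]
    exact hle ω
  constructor
  · calc ∫ ω, f ω ∂P ≤ ∫ ω, g ω ∂P := integral_mono hfint hgint hle
      _ = (α / K) * ∑ i ∈ N, ∫ ω, e i ω ∂P := by
          simp only [hgdef, integral_const_mul]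
          congr 1
          exact integral_finset_sum N hint
      _ ≤ (α / K) * N.card := by
          refine mul_le_mul_of_nonneg_left ?_ (div_nonneg hα0.le hKpos.le)
          calc ∑ i ∈ N, ∫ ω, e i ω ∂P ≤ ∑ i ∈ N, (1:ℝ) :=
                Finset.sum_le_sum hEe
            _ = N.card := by simp
      _ = α * N.card / K := by ring
  · have hNK : (N.card : ℝ) ≤ K := by
      have := Finset.card_le_univ N
      simp only [Finset.card_univ, Fintype.card_fin] at this
      exact_mod_cast this
    rw [div_le_iff₀ hKpos]
    calc α * (N.card : ℝ) ≤ α * K := mul_le_mul_of_nonneg_left hNK hα0.le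
      _ = α * K := rfl
end

section
/- Calibrators turn p-values into e-values: let f : [0,1] → [0,∞] be nonincreasing with ∫₀¹ f(x) dx ≤ 1, and let p be a random variable taking values in [0,1] with P(p ≤ u) ≤ u for every u ∈ [0,1]. Then E[f(p)] ≤ 1. -/
open MeasureTheory
open scoped ENNReal

/-- **Calibrators turn p-values into e-values**: if `f : [0,1] → [0,∞]` is
nonincreasing with `∫₀¹ f ≤ 1`, and `p` is a p-value (a `[0,1]`-valued random
variable with `P(p ≤ u) ≤ u` for all `u ∈ [0,1]`), then `E[f(p)] ≤ 1`. -/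
theorem calibrator_gives_evalue
    {Ω : Type*} [MeasurableSpace Ω] (P : Measure Ω) [IsProbabilityMeasure P]
    (f : ℝ → ℝ≥0∞) (hf : AntitoneOn f (Set.Icc (0:ℝ) 1))
    (hf1 : ∫⁻ x in Set.Icc (0:ℝ) 1, f x ≤ 1)
    (p : Ω → ℝ) (hp : Measurable p) (hp01 : ∀ ω, p ω ∈ Set.Icc (0:ℝ) 1)
    (hpv : ∀ u ∈ Set.Icc (0:ℝ) 1, P {ω | p ω ≤ u} ≤ ENNReal.ofReal u) :
    ∫⁻ ω, f (p ω) ∂P ≤ 1 := by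
  classical
  -- projection onto [0,1]
  set π : ℝ → ℝ := fun x => min 1 (max 0 x) with hπ
  have hπ_mem : ∀ x, π x ∈ Set.Icc (0:ℝ) 1 := by
    intro x
    constructor
    · exact le_min zero_le_one (le_max_left 0 x)
    · exact min_le_left _ _
  have hπ_mono : Monotone π := fun x y hxy =>
    min_le_min le_rfl (max_le_max le_rfl hxy)
  have hπ_id : ∀ x ∈ Set.Icc (0:ℝ) 1, π x = x := by
    intro x hx
    simp [hπ, max_eq_right hx.1, min_eq_right hx.2]
  -- extension g of f
  set g : ℝ → ℝ≥0∞ := fun x => f (π x) with hg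
  have hg_anti : Antitone g := fun x y hxy =>
    hf (hπ_mem x) (hπ_mem y) (hπ_mono hxy)
  have hg_meas : Measurable g := hg_anti.measurable
  have hg_eq : ∀ x ∈ Set.Icc (0:ℝ) 1, g x = f x := by
    intro x hx; simp [hg, hπ_id x hx]
  -- f is finite on (0,1]
  have hfin : ∀ x ∈ Set.Ioc (0:ℝ) 1, f x ≠ ∞ := by
    intro x hx hcontra
    have h1 : ∫⁻ y in Set.Icc (0:ℝ) x, f y ≤ ∫⁻ y in Set.Icc (0:ℝ) 1, f y :=
      lintegral_mono' (Measure.restrict_mono (Set.Icc_subset_Icc le_rfl hx.2) le_rfl) le_rfl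
    have h2 : (∞ : ℝ≥0∞) * volume (Set.Icc (0:ℝ) x) ≤ ∫⁻ y in Set.Icc (0:ℝ) x, f y := by
      rw [← setLIntegral_const]
      refine setLIntegral_mono' measurableSet_Icc ?_
      intro y hy
      have : f x ≤ f y := hf ⟨hy.1, hy.2.trans hx.2⟩ ⟨hx.1.le, hx.2⟩ hy.2
      rw [hcontra] at this
      simpa using this
    have hvol : volume (Set.Icc (0:ℝ) x) = ENNReal.ofReal x := by
      rw [Real.volume_Icc]; simp
    have hxpos : (0:ℝ≥0∞) < ENNReal.ofReal x := by
      simpa using ENNReal.ofReal_pos.mpr hx.1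
    have : (∞ : ℝ≥0∞) ≤ 1 := by
      calc (∞ : ℝ≥0∞) = ∞ * ENNReal.ofReal x := by
            rw [ENNReal.top_mul hxpos.ne']
        _ = ∞ * volume (Set.Icc (0:ℝ) x) := by rw [hvol]
        _ ≤ ∫⁻ y in Set.Icc (0:ℝ) x, f y := h2
        _ ≤ ∫⁻ y in Set.Icc (0:ℝ) 1, f y := h1
        _ ≤ 1 := hf1
    exact (by simp : ¬ ((∞ : ℝ≥0∞) ≤ 1)) this
  have hgfin : ∀ x : ℝ, 0 < x → g x ≠ ∞ := by
    intro x hx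
    have : π x ∈ Set.Ioc (0:ℝ) 1 := by
      constructor
      · exact lt_min zero_lt_one (lt_max_of_lt_right hx)
      · exact min_le_left _ _
    exact hfin _ this
  -- real-valued version
  set h : ℝ → ℝ := fun x => (g x).toReal with hh
  have hh_meas : Measurable h := hg_meas.ennreal_toReal
  have hh_nn : ∀ x, 0 ≤ h x := fun x => ENNReal.toReal_nonneg
  -- p > 0 a.e.
  have hp0 : P {ω | p ω ≤ 0} = 0 := le_antisymm (by simpa using hpv 0 ⟨le_rfl, zero_le_one⟩) zero_le
  have hae : ∀ᵐ ω ∂P, 0 < p ω := by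
    rw [ae_iff]
    have : {ω | ¬ 0 < p ω} = {ω | p ω ≤ 0} := by ext ω; simp
    rw [this]; exact hp0
  -- LHS via layer cake
  have stepA : ∫⁻ ω, f (p ω) ∂P = ∫⁻ ω, ENNReal.ofReal (h (p ω)) ∂P := by
    refine lintegral_congr_ae ?_
    filter_upwards [hae] with ω hω
    rw [hh]
    rw [ENNReal.ofReal_toReal (hgfin _ hω)]
    exact (hg_eq _ (hp01 ω)).symm
  have stepC : ∫⁻ ω, ENNReal.ofReal (h (p ω)) ∂P
      = ∫⁻ t in Set.Ioi (0:ℝ), P {ω | t < h (p ω)} :=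
    lintegral_eq_lintegral_meas_lt P (ae_of_all _ fun ω => hh_nn (p ω))
      ((hh_meas.comp hp).aemeasurable)
  -- RHS via layer cake
  have stepD : ∫⁻ x in Set.Icc (0:ℝ) 1, ENNReal.ofReal (h x)
      = ∫⁻ t in Set.Ioi (0:ℝ), (volume.restrict (Set.Icc (0:ℝ) 1)) {x | t < h x} :=
    lintegral_eq_lintegral_meas_lt _ (ae_of_all _ hh_nn) hh_meas.aemeasurable
  have stepB : ∫⁻ x in Set.Icc (0:ℝ) 1, ENNReal.ofReal (h x) ≤ 1 := by
    refine le_trans (le_of_eq ?_) hf1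
    refine lintegral_congr_ae ?_
    have hne : ∀ᵐ x ∂(volume.restrict (Set.Icc (0:ℝ) 1)), x ≠ 0 := by
      refine ae_mono Measure.restrict_le_self ?_
      have hset : {x : ℝ | ¬ x ≠ 0} = {0} := by ext x; simp
      exact ae_iff.mpr (by rw [hset]; exact Real.volume_singleton)
    filter_upwards [hne, self_mem_ae_restrict (measurableSet_Icc :
      MeasurableSet (Set.Icc (0:ℝ) 1))] with x hx0 hx
    have hxpos : 0 < x := lt_of_le_of_ne hx.1 (Ne.symm hx0)
    rw [hh, ENNReal.ofReal_toReal (hgfin x hxpos), hg_eq x hx]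
  -- Key tail comparison
  have key : ∀ t ∈ Set.Ioi (0:ℝ),
      P {ω | t < h (p ω)} ≤ (volume.restrict (Set.Icc (0:ℝ) 1)) {x | t < h x} := by
    intro t ht
    have ht' : (0:ℝ) < t := ht
    set A : Set ℝ := {x ∈ Set.Ioc (0:ℝ) 1 | t < h x} with hA
    have hsub : ∀ ω, 0 < p ω → t < h (p ω) → p ω ∈ A :=
      fun ω h1 h2 => ⟨⟨h1, (hp01 ω).2⟩, h2⟩
    by_cases hAe : A = ∅
    · have : {ω | t < h (p ω)} ⊆ {ω | p ω ≤ 0} := by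
        intro ω hω
        by_contra hc
        have h1 : 0 < p ω := lt_of_not_ge hc
        have := hsub ω h1 hω
        rw [hAe] at this
        exact this
      calc P {ω | t < h (p ω)} ≤ P {ω | p ω ≤ 0} := measure_mono this
        _ = 0 := hp0
        _ ≤ _ := zero_le
    · have hAne : A.Nonempty := Set.nonempty_iff_ne_empty.mpr hAe
      have hAbdd : BddAbove A := ⟨1, fun x hx => hx.1.2⟩
      set u : ℝ := sSup A with hu
      have hu1 : u ≤ 1 := csSup_le hAne (fun x hx => hx.1.2)
      have hu0 : 0 ≤ u := by
        obtain ⟨a, ha⟩ := hAne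
        exact ha.1.1.le.trans (le_csSup hAbdd ha)
      -- P side
      have hPside : P {ω | t < h (p ω)} ≤ ENNReal.ofReal u := by
        have hss : {ω | t < h (p ω)} ⊆ {ω | p ω ≤ u} := by
          intro ω hω
          by_cases hc : 0 < p ω
          · exact le_csSup hAbdd (hsub ω hc hω)
          · exact (not_lt.mp hc).trans hu0
        exact (measure_mono hss).trans (hpv u ⟨hu0, hu1⟩)
      -- volume side
      have hVside : ENNReal.ofReal u ≤ (volume.restrict (Set.Icc (0:ℝ) 1)) {x | t < h x} := by
        have hss : Set.Ioo (0:ℝ) u ⊆ {x | t < h x} ∩ Set.Icc (0:ℝ) 1 := by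
          intro x hx
          obtain ⟨s, hsA, hxs⟩ := exists_lt_of_lt_csSup hAne hx.2
          have hx01 : x ∈ Set.Ioc (0:ℝ) 1 := ⟨hx.1, hx.2.le.trans hu1⟩
          have hgs : ENNReal.ofReal t < g s := by
            have : t < (g s).toReal := hsA.2
            exact (ENNReal.ofReal_lt_iff_lt_toReal ht'.le (hgfin s hsA.1.1)).mpr this
          have hgx : ENNReal.ofReal t < g x := lt_of_lt_of_le hgs (hg_anti hxs.le)
          have : t < h x := by
            rw [hh]
            exact (ENNReal.ofReal_lt_iff_lt_toReal ht'.le (hgfin x hx.1)).mp hgx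
          exact ⟨this, hx01.1.le, hx01.2⟩
        calc ENNReal.ofReal u = volume (Set.Ioo (0:ℝ) u) := by
              rw [Real.volume_Ioo]; simp
          _ ≤ volume ({x | t < h x} ∩ Set.Icc (0:ℝ) 1) := measure_mono hss
          _ = (volume.restrict (Set.Icc (0:ℝ) 1)) {x | t < h x} :=
              (Measure.restrict_apply (measurableSet_lt measurable_const hh_meas)).symm
      exact hPside.trans hVside
  calc ∫⁻ ω, f (p ω) ∂P
      = ∫⁻ t in Set.Ioi (0:ℝ), P {ω | t < h (p ω)} := by rw [stepA, stepC]
    _ ≤ ∫⁻ t in Set.Ioi (0:ℝ), (volume.restrict (Set.Icc (0:ℝ) 1)) {x | t < h x} :=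
        setLIntegral_mono' measurableSet_Ioi key
    _ = ∫⁻ x in Set.Icc (0:ℝ) 1, ENNReal.ofReal (h x) := stepD.symm
    _ ≤ 1 := stepB
end

section
/- Sums of consecutively started test supermartingales form an e-detector (Shin–Ramdas–Rinaldo): for each i ≥ 1, let (A^{(i)}_t)_{t ≥ i} be a nonnegative process adapted to (𝓕_t) such that E[A^{(i)}_i | 𝓕_{i−1}] ≤ 1 a.s. and E[A^{(i)}_{t+1} | 𝓕_t] ≤ A^{(i)}_t a.s. for all t ≥ i. Define M_t := Σ_{i=1}^t A^{(i)}_t for t ≥ 1 and M_0 := 0. Then for every stopping time τ with respect to (𝓕_t) (possibly infinite, with M_∞ := lim inf_{t→∞} M_t on {τ = ∞}), E[M_τ] ≤ E[τ]. -/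
open MeasureTheory Filter
open scoped ENNReal

lemma aux_ofReal_liminf {x : ℕ → ℝ} (hx : ∀ n, 0 ≤ x n) :
    ENNReal.ofReal (liminf x atTop) ≤ liminf (fun n => ENNReal.ofReal (x n)) atTop := by
  rw [le_liminf_iff]
  intro b hb
  have hbt : b ≠ ⊤ := ne_top_of_lt (hb.trans ENNReal.ofReal_lt_top)
  have h2 : b.toReal < liminf x atTop := (ENNReal.lt_ofReal_iff_toReal_lt hbt).mp hb
  have hbdd : IsBoundedUnder (· ≥ ·) atTop x := isBoundedUnder_of ⟨0, fun n => hx n⟩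
  filter_upwards [eventually_lt_of_lt_liminf h2 hbdd] with n hn
  calc b = ENNReal.ofReal b.toReal := (ENNReal.ofReal_toReal hbt).symm
    _ < ENNReal.ofReal (x n) :=
      (ENNReal.ofReal_lt_ofReal_iff (lt_of_le_of_lt ENNReal.toReal_nonneg hn)).mpr hn

/-- **Sums of consecutively started test supermartingales form an e-detector**
(Shin–Ramdas–Rinaldo): if for each `i ≥ 1` the process `(A i t)_{t ≥ i}` is
nonnegative, adapted, with `E[A i i | ℱ (i-1)] ≤ 1` and
`E[A i (t+1) | ℱ t] ≤ A i t` for `t ≥ i`, then `M t = ∑_{i=1}^t A i t`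
satisfies `E[M_τ] ≤ E[τ]` for every (possibly infinite) stopping time `τ`. -/
theorem edetector_sum_of_supermartingales
    {Ω : Type*} {m0 : MeasurableSpace Ω} {P : Measure Ω} [IsProbabilityMeasure P]
    {ℱ : Filtration ℕ m0}
    (A : ℕ → ℕ → Ω → ℝ)
    (hadp : ∀ i t, 1 ≤ i → i ≤ t → StronglyMeasurable[ℱ t] (A i t))
    (hnn : ∀ i t, 1 ≤ i → i ≤ t → 0 ≤ᵐ[P] A i t)
    (hint : ∀ i t, 1 ≤ i → i ≤ t → Integrable (A i t) P)
    (hinit : ∀ i, 1 ≤ i → P[A i i|ℱ (i-1)] ≤ᵐ[P] fun _ => 1)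
    (hsuper : ∀ i t, 1 ≤ i → i ≤ t → P[A i (t+1)|ℱ t] ≤ᵐ[P] A i t)
    (M : ℕ → Ω → ℝ)
    (hM : ∀ t ω, M t ω = ∑ i ∈ Finset.Icc 1 t, A i t ω)
    (τ : Ω → ℕ∞)
    (hτ : ∀ t : ℕ, MeasurableSet[ℱ t] {ω | τ ω ≤ (t : ℕ∞)}) :
    ∫⁻ ω, (if τ ω = ⊤ then ENNReal.ofReal (Filter.liminf (fun t => M t ω) Filter.atTop)
           else ENNReal.ofReal (M (τ ω).toNat ω)) ∂P
      ≤ ∫⁻ ω, (τ ω : ℝ≥0∞) ∂P := by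
  classical
  -- basic properties of M
  have hMfun : ∀ t, M t = fun ω => ∑ i ∈ Finset.Icc 1 t, A i t ω :=
    fun t => funext fun ω => hM t ω
  have hMmeas : ∀ t, StronglyMeasurable[ℱ t] (M t) := by
    intro t
    rw [hMfun t]
    exact Finset.stronglyMeasurable_fun_sum _ fun i hi =>
      hadp i t (Finset.mem_Icc.mp hi).1 (Finset.mem_Icc.mp hi).2
  have hMint : ∀ t, Integrable (M t) P := by
    intro t
    rw [hMfun t]
    exact integrable_finset_sum _ fun i hi =>
      hint i t (Finset.mem_Icc.mp hi).1 (Finset.mem_Icc.mp hi).2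
  have hMnn : ∀ t, ∀ᵐ ω ∂P, 0 ≤ M t ω := by
    intro t
    have h : ∀ᵐ ω ∂P, ∀ i ∈ Finset.Icc 1 t, 0 ≤ A i t ω := by
      rw [Filter.eventually_all_finset]
      intro i hi
      exact hnn i t (Finset.mem_Icc.mp hi).1 (Finset.mem_Icc.mp hi).2
    filter_upwards [h] with ω hω
    rw [hM]
    exact Finset.sum_nonneg hω
  -- the supermartingale `f t = M t - t`
  set f : ℕ → Ω → ℝ := fun s ω => M s ω - s with hfdef
  have hsupmart : Supermartingale f ℱ P := by
    refine supermartingale_nat (fun s => (hMmeas s).sub stronglyMeasurable_const)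
      (fun s => (hMint s).sub (integrable_const _)) (fun s => ?_)
    have hsplit : M (s+1) = A (s+1) (s+1) + fun ω => ∑ i ∈ Finset.Icc 1 s, A i (s+1) ω := by
      funext ω
      rw [hM, ← Finset.insert_Icc_right_eq_Icc_add_one (by omega),
        Finset.sum_insert (by simp)]
      rfl
    have hintsum : Integrable (fun ω => ∑ i ∈ Finset.Icc 1 s, A i (s+1) ω) P :=
      integrable_finset_sum _ fun i hi =>
        hint i (s+1) (Finset.mem_Icc.mp hi).1 ((Finset.mem_Icc.mp hi).2.trans (by omega))
    have h1 : P[M (s+1)|ℱ s] =ᵐ[P]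
        P[A (s+1) (s+1)|ℱ s] + P[fun ω => ∑ i ∈ Finset.Icc 1 s, A i (s+1) ω|ℱ s] := by
      rw [hsplit]
      exact condExp_add (hint (s+1) (s+1) (by omega) le_rfl) hintsum (ℱ s)
    have h2 : P[fun ω => ∑ i ∈ Finset.Icc 1 s, A i (s+1) ω|ℱ s] =ᵐ[P]
        fun ω => ∑ i ∈ Finset.Icc 1 s, (P[A i (s+1)|ℱ s]) ω := by
      have := condExp_finset_sum (m := ℱ s) (μ := P) (s := Finset.Icc 1 s)
        (f := fun i => A i (s+1)) (fun i hi =>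
          hint i (s+1) (Finset.mem_Icc.mp hi).1 ((Finset.mem_Icc.mp hi).2.trans (by omega)))
      have heq : (fun ω => ∑ i ∈ Finset.Icc 1 s, A i (s+1) ω)
          = ∑ i ∈ Finset.Icc 1 s, A i (s+1) := by
        funext ω; simp
      rw [heq]
      filter_upwards [this] with ω hω
      simpa using hω
    have hsum_le : ∀ᵐ ω ∂P, ∑ i ∈ Finset.Icc 1 s, (P[A i (s+1)|ℱ s]) ω
        ≤ ∑ i ∈ Finset.Icc 1 s, A i s ω := by
      have h : ∀ᵐ ω ∂P, ∀ i ∈ Finset.Icc 1 s, (P[A i (s+1)|ℱ s]) ω ≤ A i s ω := by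
        rw [Filter.eventually_all_finset]
        intro i hi
        exact hsuper i s (Finset.mem_Icc.mp hi).1 (Finset.mem_Icc.mp hi).2
      filter_upwards [h] with ω hω
      exact Finset.sum_le_sum hω
    have hinit' : P[A (s+1) (s+1)|ℱ s] ≤ᵐ[P] fun _ => 1 := by
      have := hinit (s+1) (by omega)
      simpa using this
    have hcondM : P[M (s+1)|ℱ s] ≤ᵐ[P] fun ω => M s ω + 1 := by
      filter_upwards [h1, h2, hsum_le, hinit'] with ω e1 e2 e3 e4
      rw [e1]
      simp only [Pi.add_apply]
      calc (P[A (s+1) (s+1)|ℱ s]) ω + (P[fun ω => ∑ i ∈ Finset.Icc 1 s, A i (s+1) ω|ℱ s]) ω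
          ≤ 1 + ∑ i ∈ Finset.Icc 1 s, A i s ω := add_le_add e4 (e2 ▸ e3)
        _ = M s ω + 1 := by rw [hM]; try ring
    have hcesub : P[f (s+1)|ℱ s] =ᵐ[P] P[M (s+1)|ℱ s] - fun _ => ((s:ℝ)+1) := by
      have : f (s+1) = M (s+1) - fun _ => ((s:ℝ)+1) := by
        funext ω; simp only [hfdef, Pi.sub_apply]; push_cast; ring
      rw [this]
      filter_upwards [condExp_sub (hMint (s+1)) (integrable_const _) (ℱ s)] with ω e1
      rw [e1]
      simp [condExp_const (ℱ.le s)]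
    filter_upwards [hcesub, hcondM] with ω e1 e2
    rw [e1]
    simp only [Pi.sub_apply, hfdef]
    have : (P[M (s+1)|ℱ s]) ω ≤ M s ω + 1 := e2
    linarith
  -- stopping times
  set σ : ℕ → Ω → ℕ := fun t ω => (min (τ ω) (t:ℕ∞)).toNat with hσdef
  have hσle : ∀ t ω, σ t ω ≤ t := fun t ω =>
    ENat.toNat_le_of_le_coe (min_le_right _ _)
  set σ' : ℕ → Ω → ℕ∞ := fun t ω => (σ t ω : ℕ∞) with hσ'def
  have hσ'le : ∀ t ω, σ' t ω ≤ (t : ℕ∞) := fun t ω => WithTop.coe_le_coe.mpr (hσle t ω)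
  have hσst : ∀ t, IsStoppingTime ℱ (σ' t) := by
    intro t s
    suffices h' : MeasurableSet[ℱ s] {ω | σ t ω ≤ s} by
      convert h' using 1; ext ω; simp [hσ'def]; exact WithTop.coe_le_coe
    by_cases h : t ≤ s
    · have : {ω | σ t ω ≤ s} = Set.univ := by
        ext ω; simp only [Set.mem_setOf_eq, Set.mem_univ, iff_true]
        exact (hσle t ω).trans h
      rw [this]
      exact MeasurableSet.univ
    · have : {ω | σ t ω ≤ s} = {ω | τ ω ≤ (s:ℕ∞)} := by
        ext ω
        simp only [Set.mem_setOf_eq, hσdef]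
        cases hτω : τ ω with
        | top =>
          simp [top_inf_eq, ENat.toNat_coe, h]
        | coe k =>
          rw [Nat.cast_le]
          rcases le_total k t with hkt | htk
          · rw [inf_eq_left.mpr (by exact_mod_cast hkt), ENat.toNat_coe]
          · rw [inf_eq_right.mpr (by exact_mod_cast htk), ENat.toNat_coe]
            constructor
            · intro hts; omega
            · intro hks; omega
      rw [this]
      exact hτ s
  -- measurability of the stopped values
  have hσmeas : ∀ t, StronglyMeasurable[ℱ t] (stoppedValue M (σ' t)) := fun t =>
    stronglyMeasurable_stoppedValue_of_le
      (StronglyAdapted.isStronglyProgressive_of_discrete (fun s => hMmeas s)) (hσst t) (hσ'le t)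
  -- the key inequality for each finite horizon t
  have key : ∀ t, ∫⁻ ω, ENNReal.ofReal (stoppedValue M (σ' t) ω) ∂P
      ≤ ∫⁻ ω, (τ ω : ℝ≥0∞) ∂P := by
    intro t
    have hint1 : Integrable (stoppedValue M (σ' t)) P :=
      integrable_stoppedValue ℕ (hσst t) hMint (hσ'le t)
    have hint2 : Integrable (fun ω => (σ t ω : ℝ)) P :=
      integrable_stoppedValue (u := fun s (_ : Ω) => (s : ℝ)) ℕ (hσst t)
        (fun s => integrable_const _) (hσ'le t)
    have hos := (hsupmart.neg).expected_stoppedValue_mono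
      (isStoppingTime_const ℱ 0) (hσst t) (fun ω => WithTop.coe_le_coe.mpr (Nat.zero_le _)) (hσ'le t)
    have hsv0 : stoppedValue (-f) (fun _ => WithTop.some (0 : ℕ)) = fun _ => (0 : ℝ) := by
      funext ω
      simp [stoppedValue, hfdef, hM]
    have hsvneg : stoppedValue (-f) (σ' t)
        = fun ω => (σ t ω : ℝ) - stoppedValue M (σ' t) ω := by
      funext ω
      simp [stoppedValue, hfdef, hσ'def]
    have hsplit : ∫ ω, stoppedValue M (σ' t) ω ∂P ≤ ∫ ω, (σ t ω : ℝ) ∂P := by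
      rw [hsv0, hsvneg] at hos
      rw [integral_sub hint2 hint1] at hos
      simp only [integral_const] at hos
      have h0 : (0:ℝ) ≤ ∫ ω, (σ t ω : ℝ) ∂P - ∫ ω, stoppedValue M (σ' t) ω ∂P := by
        simpa using hos
      linarith
    have hnn1 : 0 ≤ᵐ[P] stoppedValue M (σ' t) := by
      filter_upwards [ae_all_iff.2 hMnn] with ω hω
      exact hω (σ t ω)
    calc ∫⁻ ω, ENNReal.ofReal (stoppedValue M (σ' t) ω) ∂P
        = ENNReal.ofReal (∫ ω, stoppedValue M (σ' t) ω ∂P) :=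
          (ofReal_integral_eq_lintegral_ofReal hint1 hnn1).symm
      _ ≤ ENNReal.ofReal (∫ ω, (σ t ω : ℝ) ∂P) := ENNReal.ofReal_le_ofReal hsplit
      _ = ∫⁻ ω, ENNReal.ofReal ((σ t ω : ℝ)) ∂P :=
          ofReal_integral_eq_lintegral_ofReal hint2
            (Filter.Eventually.of_forall fun ω => by positivity)
      _ ≤ ∫⁻ ω, (τ ω : ℝ≥0∞) ∂P := by
          refine lintegral_mono fun ω => ?_
          rw [ENNReal.ofReal_natCast]
          cases hτω : τ ω with
          | top => exact le_top
          | coe k =>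
            have hk : σ t ω ≤ k := by
              simp only [hσdef, hτω]
              exact ENat.toNat_le_of_le_coe inf_le_left
            calc ((σ t ω : ℕ) : ℝ≥0∞) ≤ ((k : ℕ) : ℝ≥0∞) := by exact_mod_cast hk
              _ = ((k : ℕ∞) : ℝ≥0∞) := by simp
  -- Fatou's lemma
  have hmeas2 : ∀ t : ℕ, Measurable fun ω => ENNReal.ofReal (stoppedValue M (σ' t) ω) :=
    fun t => ENNReal.measurable_ofReal.comp (((hσmeas t).mono (ℱ.le t)).measurable)
  have hptwise : ∀ᵐ ω ∂P,
      (if τ ω = ⊤ then ENNReal.ofReal (liminf (fun t => M t ω) atTop)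
       else ENNReal.ofReal (M (τ ω).toNat ω))
      ≤ liminf (fun t => ENNReal.ofReal (stoppedValue M (σ' t) ω)) atTop := by
    filter_upwards [ae_all_iff.2 hMnn] with ω hω
    by_cases hT : τ ω = ⊤
    · rw [if_pos hT]
      have hσeq : ∀ t : ℕ, σ t ω = t := by
        intro t; simp [hσdef, hT, top_inf_eq, ENat.toNat_coe]
      have heq : (fun t => ENNReal.ofReal (stoppedValue M (σ' t) ω))
          = fun t => ENNReal.ofReal (M t ω) := by
        funext t; simp [stoppedValue, hσ'def, hσeq t]
      rw [heq]
      exact aux_ofReal_liminf hω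
    · rw [if_neg hT]
      set k := (τ ω).toNat with hk
      have hτk : τ ω = (k : ℕ∞) := (ENat.coe_toNat hT).symm
      have hσeq : ∀ t : ℕ, k ≤ t → σ t ω = k := by
        intro t ht
        simp only [hσdef, hτk]
        rw [inf_eq_left.mpr (by exact_mod_cast ht), ENat.toNat_coe]
      have hev : ∀ᶠ t in atTop, ENNReal.ofReal (stoppedValue M (σ' t) ω)
          = ENNReal.ofReal (M k ω) := by
        filter_upwards [eventually_ge_atTop k] with t ht
        simp [stoppedValue, hσ'def, hσeq t ht]
      rw [liminf_congr hev, liminf_const]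
  calc ∫⁻ ω, (if τ ω = ⊤ then ENNReal.ofReal (liminf (fun t => M t ω) atTop)
        else ENNReal.ofReal (M (τ ω).toNat ω)) ∂P
      ≤ ∫⁻ ω, liminf (fun t => ENNReal.ofReal (stoppedValue M (σ' t) ω)) atTop ∂P :=
        lintegral_mono_ae hptwise
    _ ≤ liminf (fun t => ∫⁻ ω, ENNReal.ofReal (stoppedValue M (σ' t) ω) ∂P) atTop :=
        lintegral_liminf_le hmeas2
    _ ≤ ∫⁻ ω, (τ ω : ℝ≥0∞) ∂P :=
        liminf_le_of_frequently_le ((Filter.Eventually.of_forall key).frequently)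
end

section
/- The Turner–Ly–Grünwald two-sample block e-variable: let (𝒴, 𝓑, ν) be a measurable space with a σ-finite measure ν, let p_a, p_b and p be probability densities with respect to ν, and let n_a, n_b ≥ 1 be integers. Let Y_1, …, Y_{n_a}, Z_1, …, Z_{n_b} be independent random elements of 𝒴 each with density p (the null: both groups have the same distribution). Define the mixture density p̄ := (n_a·p_a + n_b·p_b)/(n_a + n_b) and S := [ Π_{i=1}^{n_a} p_a(Y_i) · Π_{j=1}^{n_b} p_b(Z_j) ] / [ Π_{i=1}^{n_a} p̄(Y_i) · Π_{j=1}^{n_b} p̄(Z_j) ], with the convention that the ratio is 0 whenever the denominator is 0. Then E[S] ≤ 1; that is, S is an e-variable for the null hypothesis of equal distributions, for every choice of the common density p. -/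
open MeasureTheory
open scoped ENNReal NNReal

private lemma tlg_div_mul_le (a x b y : ℝ≥0∞) (hb : b = 0 → a = 0) (hy : y = 0 → x = 0) :
    (a * x) / (b * y) ≤ (a / b) * (x / y) := by
  rcases eq_or_ne b 0 with h | hb0
  · simp [h, hb h]
  rcases eq_or_ne y 0 with h | hy0
  · simp [h, hy h]
  rcases eq_or_ne b ∞ with h | hbt
  · rw [h, ENNReal.top_mul hy0, ENNReal.div_top]
    exact zero_le
  rcases eq_or_ne y ∞ with h | hyt
  · rw [h, ENNReal.mul_top hb0, ENNReal.div_top]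
    exact zero_le
  refine le_of_eq ?_
  rw [div_eq_mul_inv, div_eq_mul_inv, div_eq_mul_inv,
    ENNReal.mul_inv (Or.inl hb0) (Or.inl hbt), mul_mul_mul_comm]

private lemma tlg_prod_div_le {ι : Type*} (s : Finset ι) (a b : ι → ℝ≥0∞)
    (h : ∀ i ∈ s, b i = 0 → a i = 0) :
    (∏ i ∈ s, a i) / (∏ i ∈ s, b i) ≤ ∏ i ∈ s, a i / b i := by
  classical
  induction s using Finset.induction_on with
  | empty => simp
  | @insert j s hj ih =>
    rw [Finset.prod_insert hj, Finset.prod_insert hj, Finset.prod_insert hj]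
    refine le_trans (tlg_div_mul_le _ _ _ _ (h j (Finset.mem_insert_self j s)) ?_) ?_
    · intro hz
      obtain ⟨i, hi, hbi⟩ := Finset.prod_eq_zero_iff.mp hz
      exact Finset.prod_eq_zero hi (h i (Finset.mem_insert_of_mem hi) hbi)
    · exact mul_le_mul_right (ih fun i hi => h i (Finset.mem_insert_of_mem hi)) _

private lemma tlg_amgm_nnreal (na nb : ℕ) (hna : 1 ≤ na) (hnb : 1 ≤ nb) (a b : ℝ≥0)
    (h : (na : ℝ≥0) * a + (nb : ℝ≥0) * b ≤ (na : ℝ≥0) + nb) : a ^ na * b ^ nb ≤ 1 := by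
  set N : ℝ≥0 := (na : ℝ≥0) + nb with hN
  have hN0 : 0 < N := by
    have : (0 : ℝ≥0) < (na : ℝ≥0) := by exact_mod_cast Nat.lt_of_lt_of_le Nat.zero_lt_one hna
    exact lt_of_lt_of_le this le_self_add
  have hw : (na : ℝ≥0) / N + (nb : ℝ≥0) / N = 1 := by
    rw [← add_div, div_self hN0.ne']
  have h1 := NNReal.geom_mean_le_arith_mean2_weighted ((na : ℝ≥0) / N) ((nb : ℝ≥0) / N) a b hw
  have h2 : (na : ℝ≥0) / N * a + (nb : ℝ≥0) / N * b ≤ 1 := by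
    rw [div_mul_eq_mul_div, div_mul_eq_mul_div, ← add_div, div_le_one hN0]
    exact h
  have h3 : a ^ (((na : ℝ≥0) / N : ℝ≥0) : ℝ) * b ^ (((nb : ℝ≥0) / N : ℝ≥0) : ℝ) ≤ 1 :=
    h1.trans h2
  have h4 := NNReal.rpow_le_one h3 (N : ℝ≥0).coe_nonneg
  have hca : (((na : ℝ≥0) / N : ℝ≥0) : ℝ) * (N : ℝ) = (na : ℝ) := by
    rw [← NNReal.coe_mul, div_mul_cancel₀ _ hN0.ne']; simp
  have hcb : (((nb : ℝ≥0) / N : ℝ≥0) : ℝ) * (N : ℝ) = (nb : ℝ) := by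
    rw [← NNReal.coe_mul, div_mul_cancel₀ _ hN0.ne']; simp
  calc a ^ na * b ^ nb = a ^ ((na : ℝ)) * b ^ ((nb : ℝ)) := by
        rw [← NNReal.rpow_natCast a na, ← NNReal.rpow_natCast b nb]
    _ = (a ^ (((na : ℝ≥0) / N : ℝ≥0) : ℝ) * b ^ (((nb : ℝ≥0) / N : ℝ≥0) : ℝ)) ^ (N : ℝ) := by
        rw [NNReal.mul_rpow, ← NNReal.rpow_mul, ← NNReal.rpow_mul, hca, hcb]
    _ ≤ 1 := h4

private lemma tlg_amgm (na nb : ℕ) (hna : 1 ≤ na) (hnb : 1 ≤ nb) (a b : ℝ≥0∞)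
    (h : (na : ℝ≥0∞) * a + (nb : ℝ≥0∞) * b ≤ (na : ℝ≥0∞) + nb) : a ^ na * b ^ nb ≤ 1 := by
  have hna0 : (na : ℝ≥0∞) ≠ 0 := by exact_mod_cast Nat.one_le_iff_ne_zero.mp hna
  have hnb0 : (nb : ℝ≥0∞) ≠ 0 := by exact_mod_cast Nat.one_le_iff_ne_zero.mp hnb
  have hNt : (na : ℝ≥0∞) + nb ≠ ∞ := by
    simp [ENNReal.add_ne_top]
  have ha : a ≠ ∞ := by
    intro hat
    rw [hat, ENNReal.mul_top hna0] at h
    exact hNt (top_le_iff.mp ((le_add_right le_rfl).trans h))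
  have hb : b ≠ ∞ := by
    intro hbt
    rw [hbt, ENNReal.mul_top hnb0] at h
    exact hNt (top_le_iff.mp ((le_add_left le_rfl).trans h))
  lift a to ℝ≥0 using ha
  lift b to ℝ≥0 using hb
  have h' : (na : ℝ≥0) * a + (nb : ℝ≥0) * b ≤ (na : ℝ≥0) + nb := by
    have := h
    rw [← ENNReal.coe_natCast na, ← ENNReal.coe_natCast nb, ← ENNReal.coe_mul, ← ENNReal.coe_mul,
      ← ENNReal.coe_add, ← ENNReal.coe_add, ENNReal.coe_le_coe] at this
    exact this
  have := tlg_amgm_nnreal na nb hna hnb a b h'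
  calc (a : ℝ≥0∞) ^ na * (b : ℝ≥0∞) ^ nb = ((a ^ na * b ^ nb : ℝ≥0) : ℝ≥0∞) := by
        push_cast; ring
    _ ≤ 1 := by exact_mod_cast this

private lemma tlg_lintegral_pi_prod {Y : Type*} [MeasurableSpace Y] (μ : Measure Y)
    [SigmaFinite μ] (f : Y → ℝ≥0∞) (hf : Measurable f) :
    ∀ n : ℕ, ∫⁻ x : Fin n → Y, ∏ i, f (x i) ∂(Measure.pi fun _ : Fin n => μ)
      = (∫⁻ y, f y ∂μ) ^ n := by
  intro n
  induction n with
  | zero => simp [Measure.pi_univ]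
  | succ n ih =>
    have hmp := measurePreserving_piFinSuccAbove (fun _ : Fin (n + 1) => μ) 0
    have hme := (MeasurableEquiv.piFinSuccAbove (fun _ : Fin (n + 1) => Y) 0).measurableEmbedding
    have key := hmp.lintegral_comp_emb hme
      (fun z : Y × (Fin n → Y) => f z.1 * ∏ j, f (z.2 j))
    have hfi : ∀ x : Fin (n + 1) → Y,
        (fun z : Y × (Fin n → Y) => f z.1 * ∏ j, f (z.2 j))
          ((MeasurableEquiv.piFinSuccAbove (fun _ : Fin (n + 1) => Y) 0) x)
        = ∏ i, f (x i) := by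
      intro x
      rw [Fin.prod_univ_succAbove (fun i => f (x i)) 0]
      simp [MeasurableEquiv.piFinSuccAbove_apply, Fin.insertNthEquiv, Fin.tail]
    calc ∫⁻ x : Fin (n + 1) → Y, ∏ i, f (x i) ∂(Measure.pi fun _ => μ)
        = ∫⁻ z : Y × (Fin n → Y), f z.1 * ∏ j, f (z.2 j)
            ∂(μ.prod (Measure.pi fun _ : Fin n => μ)) := by
          rw [← key]; exact lintegral_congr fun x => (hfi x).symm
      _ = (∫⁻ y, f y ∂μ) * ∫⁻ x : Fin n → Y, ∏ j, f (x j) ∂(Measure.pi fun _ : Fin n => μ) :=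
          lintegral_prod_mul hf.aemeasurable
            (Finset.measurable_prod Finset.univ
              (fun j _ => hf.comp (measurable_pi_apply j))).aemeasurable
      _ = (∫⁻ y, f y ∂μ) ^ (n + 1) := by rw [ih, pow_succ, mul_comm]

/-- **The Turner–Ly–Grünwald two-sample block e-variable**: let `pa, pb, p` be
probability densities w.r.t. a σ-finite measure `ν`, let `p̄` be the mixture
density `(na·pa + nb·pb)/(na+nb)`, and let the `na + nb` observations of the
block be i.i.d. with density `p` (the null of equal distributions, joint law a
product measure). Then the block statistic
`S = ∏ᵢ pa(Yᵢ) ∏ⱼ pb(Zⱼ) / (∏ᵢ p̄(Yᵢ) ∏ⱼ p̄(Zⱼ))` has expectation at most one,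
i.e. it is an e-variable, whatever the common density `p` is. -/
theorem turner_two_sample_block_evariable
    {Y : Type*} [MeasurableSpace Y] (ν : Measure Y) [SigmaFinite ν]
    (pa pb p : Y → ℝ≥0∞)
    (hpa : Measurable pa) (hpb : Measurable pb) (hp : Measurable p)
    (hpa1 : ∫⁻ y, pa y ∂ν = 1) (hpb1 : ∫⁻ y, pb y ∂ν = 1) (hp1 : ∫⁻ y, p y ∂ν = 1)
    (na nb : ℕ) (hna : 1 ≤ na) (hnb : 1 ≤ nb)
    (pbar : Y → ℝ≥0∞)
    (hpbar : ∀ y, pbar y = ((na : ℝ≥0∞) * pa y + (nb : ℝ≥0∞) * pb y) / ((na : ℝ≥0∞) + (nb : ℝ≥0∞)))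
    (μ : Measure Y) [IsProbabilityMeasure μ] (hμ : μ = ν.withDensity p) :
    ∫⁻ w : (Fin na → Y) × (Fin nb → Y),
        ((∏ i, pa (w.1 i)) * ∏ j, pb (w.2 j))
          / ((∏ i, pbar (w.1 i)) * ∏ j, pbar (w.2 j))
      ∂((Measure.pi fun _ : Fin na => μ).prod (Measure.pi fun _ : Fin nb => μ))
      ≤ 1 := by
  have hna0 : (na : ℝ≥0∞) ≠ 0 := by exact_mod_cast Nat.one_le_iff_ne_zero.mp hna
  have hnb0 : (nb : ℝ≥0∞) ≠ 0 := by exact_mod_cast Nat.one_le_iff_ne_zero.mp hnb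
  have hN0 : (na : ℝ≥0∞) + nb ≠ 0 := by simp [hna0]
  have hNt : (na : ℝ≥0∞) + nb ≠ ∞ := by simp
  -- measurability of pbar
  have hpbarm : Measurable pbar := by
    have hfe : pbar = fun y => ((na : ℝ≥0∞) * pa y + (nb : ℝ≥0∞) * pb y)
        / ((na : ℝ≥0∞) + (nb : ℝ≥0∞)) := funext hpbar
    rw [hfe]
    exact ((hpa.const_mul _).add (hpb.const_mul _)).div measurable_const
  -- pbar y = 0 forces pa y = 0 and pb y = 0
  have hzero : ∀ y, pbar y = 0 → pa y = 0 ∧ pb y = 0 := by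
    intro y hy
    rw [hpbar y, ENNReal.div_eq_zero_iff] at hy
    rcases hy with hy | hy
    · rw [add_eq_zero] at hy
      exact ⟨by simpa [hna0] using hy.1, by simpa [hnb0] using hy.2⟩
    · exact absurd hy hNt
  set f : Y → ℝ≥0∞ := fun y => pa y / pbar y with hfdef
  set g : Y → ℝ≥0∞ := fun y => pb y / pbar y with hgdef
  have hfm : Measurable f := hpa.div hpbarm
  have hgm : Measurable g := hpb.div hpbarm
  -- pointwise key inequality
  have hpoint : ∀ y, (na : ℝ≥0∞) * f y + (nb : ℝ≥0∞) * g y ≤ (na : ℝ≥0∞) + nb := by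
    intro y
    have e1 : (na : ℝ≥0∞) * f y + (nb : ℝ≥0∞) * g y
        = ((na : ℝ≥0∞) * pa y + (nb : ℝ≥0∞) * pb y) / pbar y := by
      simp only [hfdef, hgdef, ← mul_div_assoc]
      rw [ENNReal.div_add_div_same]
    have e2 : (na : ℝ≥0∞) * pa y + (nb : ℝ≥0∞) * pb y = pbar y * ((na : ℝ≥0∞) + nb) := by
      rw [hpbar y, ENNReal.div_mul_cancel hN0 hNt]
    rw [e1, e2, mul_comm (pbar y), mul_div_assoc]
    calc ((na : ℝ≥0∞) + nb) * (pbar y / pbar y) ≤ ((na : ℝ≥0∞) + nb) * 1 :=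
          mul_le_mul_right ENNReal.div_self_le_one _
      _ = (na : ℝ≥0∞) + nb := mul_one _
  set a : ℝ≥0∞ := ∫⁻ y, f y ∂μ with hadef
  set b : ℝ≥0∞ := ∫⁻ y, g y ∂μ with hbdef
  have key : (na : ℝ≥0∞) * a + (nb : ℝ≥0∞) * b ≤ (na : ℝ≥0∞) + nb := by
    rw [hadef, hbdef, ← lintegral_const_mul _ hfm, ← lintegral_const_mul _ hgm,
      ← lintegral_add_left (hfm.const_mul _)]
    calc ∫⁻ y, (na : ℝ≥0∞) * f y + (nb : ℝ≥0∞) * g y ∂μ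
        ≤ ∫⁻ _, ((na : ℝ≥0∞) + nb) ∂μ := lintegral_mono hpoint
      _ = (na : ℝ≥0∞) + nb := by simp
  have hamgm : a ^ na * b ^ nb ≤ 1 := tlg_amgm na nb hna hnb a b key
  calc ∫⁻ w : (Fin na → Y) × (Fin nb → Y),
        ((∏ i, pa (w.1 i)) * ∏ j, pb (w.2 j))
          / ((∏ i, pbar (w.1 i)) * ∏ j, pbar (w.2 j))
      ∂((Measure.pi fun _ : Fin na => μ).prod (Measure.pi fun _ : Fin nb => μ))
      ≤ ∫⁻ w : (Fin na → Y) × (Fin nb → Y),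
          (∏ i, f (w.1 i)) * ∏ j, g (w.2 j)
        ∂((Measure.pi fun _ : Fin na => μ).prod (Measure.pi fun _ : Fin nb => μ)) := by
        refine lintegral_mono fun w => ?_
        refine le_trans (tlg_div_mul_le _ _ _ _ ?_ ?_) ?_
        · intro hz
          obtain ⟨i, hi, hbi⟩ := Finset.prod_eq_zero_iff.mp hz
          exact Finset.prod_eq_zero hi ((hzero _ hbi).1)
        · intro hz
          obtain ⟨j, hj, hbj⟩ := Finset.prod_eq_zero_iff.mp hz
          exact Finset.prod_eq_zero hj ((hzero _ hbj).2)
        · exact mul_le_mul'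
            (tlg_prod_div_le _ _ _ fun i _ hb0 => (hzero _ hb0).1)
            (tlg_prod_div_le _ _ _ fun j _ hb0 => (hzero _ hb0).2)
    _ = (∫⁻ x : Fin na → Y, ∏ i, f (x i) ∂(Measure.pi fun _ : Fin na => μ))
        * ∫⁻ x : Fin nb → Y, ∏ j, g (x j) ∂(Measure.pi fun _ : Fin nb => μ) :=
        lintegral_prod_mul
          (Finset.measurable_prod Finset.univ
            (fun i _ => hfm.comp (measurable_pi_apply i))).aemeasurable
          (Finset.measurable_prod Finset.univ
            (fun j _ => hgm.comp (measurable_pi_apply j))).aemeasurable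
    _ = a ^ na * b ^ nb := by
        rw [tlg_lintegral_pi_prod μ f hfm na, tlg_lintegral_pi_prod μ g hgm nb]
    _ ≤ 1 := hamgm
end
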